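/- Let μ be a regular TIS state of the F-SSEP with μ(F) = 0. Let I ⊂ ℤ be an interval and θ ∈ {0,1}^I, and suppose that either |I| ≥ 2, or I = {i} and θ(i) = 0. Then P_μ({ξ : ξ_t|_I = θ for all t ∈ ℤ}) = 0. -/

import Mathlib

open MeasureTheory Filter
open scoped ENNReal

attribute [local instance] Classical.propDecidable

noncomputable section
namespace FSSEPPaper

/-- Configuration space of the F-SSEP. -/
abbrev X : Type := ℤ → Bool
/-- Configuration space of the SSM (stack model). -/
abbrev XS : Type := ℤ → ℕ
/-- Parity sequences. -/
abbrev PS : Type := ℤ → Bool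

/-- The `(m+1)`-st binary digit of `x`. -/
def rbit (m : ℕ) (x : ℝ) : Bool := decide (⌊x * 2 ^ (m + 1)⌋ % 2 = 1)

/-- The i.i.d. fair-coin product measure on `ℤ → Bool`, realized through the binary
digits of a uniform random number in `(0,1)`. -/
def coin : Measure (ℤ → Bool) :=
  (volume.restrict (Set.Ioo (0:ℝ) 1)).map (fun x (i : ℤ) => rbit (Encodable.encode i) x)

/-! ### F-SSEP dynamics -/

/-- `wantsR η i`: the particle at `i` attempts to jump to the right. -/
def wantsR (η : X) (i : ℤ) : Bool := η i && η (i - 1) && !η (i + 1)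
/-- `wantsL η i`: the particle at `i` attempts to jump to the left. -/
def wantsL (η : X) (i : ℤ) : Bool := η i && η (i + 1) && !η (i - 1)
/-- The particle at `i` jumps to the right (the coin at the target site resolves conflicts). -/
def jumpsR (η : X) (α : ℤ → Bool) (i : ℤ) : Bool :=
  wantsR η i && (!(wantsL η (i + 2)) || α (i + 1))
/-- The particle at `i` jumps to the left. -/
def jumpsL (η : X) (α : ℤ → Bool) (i : ℤ) : Bool :=
  wantsL η i && (!(wantsR η (i - 2)) || !(α (i - 1)))
/-- One synchronous step of the F-SSEP given the coin field `α`. -/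
def fstep (η : X) (α : ℤ → Bool) : X := fun i =>
  (η i && !(jumpsR η α i) && !(jumpsL η α i)) || jumpsR η α (i - 1) || jumpsL η α (i + 1)

/-- The transition kernel of the F-SSEP. -/
def QF (η : X) : Measure X := coin.map (fstep η)

/-! ### SSM dynamics -/

/-- Net rightward particle flow across the bond `⟨k,k+1⟩` given the coin field `α`. -/
def flow (n : XS) (α : ℤ → Bool) (k : ℤ) : ℤ :=
  if 2 ≤ n k then (if 2 ≤ n (k + 1) then (if α k then 1 else -1) else 1)
  else (if 2 ≤ n (k + 1) then -1 else 0)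
/-- One synchronous step of the SSM given the coin field `α`. -/
def sstep (n : XS) (α : ℤ → Bool) : XS := fun i =>
  ((n i : ℤ) + flow n α (i - 1) - flow n α i).toNat

/-- The transition kernel of the SSM. -/
def QS (n : XS) : Measure XS := coin.map (sstep n)

/-! ### Shifts and classes of measures -/

/-- The shift `τ` on sequences of Booleans: `(τη)(i) = η(i-1)`. -/
def shf (η : ℤ → Bool) : ℤ → Bool := fun i => η (i - 1)
/-- The shift `τ` on stack configurations. -/
def shs (n : XS) : XS := fun i => n (i - 1)

/-- Translation-invariant probability measure on `X`. -/
def TIF (μ : Measure X) : Prop := IsProbabilityMeasure μ ∧ μ.map shf = μ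
/-- Translation-invariant stationary state of the F-SSEP. -/
def TISF (μ : Measure X) : Prop := TIF μ ∧ μ.bind QF = μ
/-- Ergodic translation-invariant measure on `X` (extreme point of the TI measures). -/
def ErgF (μ : Measure X) : Prop := TIF μ ∧ ∀ μ₁ μ₂ : Measure X, TIF μ₁ → TIF μ₂ →
  ∀ p : ℝ≥0∞, 0 < p → p < 1 → μ = p • μ₁ + (1 - p) • μ₂ → μ₁ = μ
/-- Extremal translation-invariant stationary state of the F-SSEP. -/
def ETISF (μ : Measure X) : Prop := TISF μ ∧ ∀ μ₁ μ₂ : Measure X, TISF μ₁ → TISF μ₂ →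
  ∀ p : ℝ≥0∞, 0 < p → p < 1 → μ = p • μ₁ + (1 - p) • μ₂ → μ₁ = μ
/-- A measure on `X` is regular if the all-ones configuration carries no mass. -/
def RegF (μ : Measure X) : Prop := μ {η : X | ∀ i, η i = true} = 0

/-- Translation-invariant probability measure on `X̂`. -/
def TI_S (μ : Measure XS) : Prop := IsProbabilityMeasure μ ∧ μ.map shs = μ
/-- Translation-invariant stationary state of the SSM. -/
def TIS_S (μ : Measure XS) : Prop := TI_S μ ∧ μ.bind QS = μ
/-- Ergodic translation-invariant measure on `X̂`. -/
def Erg_S (μ : Measure XS) : Prop := TI_S μ ∧ ∀ μ₁ μ₂ : Measure XS, TI_S μ₁ → TI_S μ₂ →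
  ∀ p : ℝ≥0∞, 0 < p → p < 1 → μ = p • μ₁ + (1 - p) • μ₂ → μ₁ = μ
/-- Extremal translation-invariant stationary state of the SSM. -/
def ETIS_S (μ : Measure XS) : Prop := TIS_S μ ∧ ∀ μ₁ μ₂ : Measure XS, TIS_S μ₁ → TIS_S μ₂ →
  ∀ p : ℝ≥0∞, 0 < p → p < 1 → μ = p • μ₁ + (1 - p) • μ₂ → μ₁ = μ
/-- A measure on `X̂` is regular if the expected stack height at the origin is finite. -/
def Reg_S (μ : Measure XS) : Prop := ∫⁻ n, (n 0 : ℝ≥0∞) ∂μ ≠ ⊤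

/-! ### Densities -/

/-- `μ` has density `ρ`: a.s. both one-sided Cesàro averages of the configuration equal `ρ`. -/
def densF (μ : Measure X) (ρ : ℝ) : Prop :=
  ∀ᵐ η ∂μ,
    Tendsto (fun N : ℕ => (∑ i ∈ Finset.range N, (if η ((i : ℤ) + 1) then (1:ℝ) else 0)) / (N : ℝ))
      atTop (nhds ρ) ∧
    Tendsto (fun N : ℕ => (∑ i ∈ Finset.range N, (if η (-(i : ℤ) - 1) then (1:ℝ) else 0)) / (N : ℝ))
      atTop (nhds ρ)

/-- `μ` has density `ρ̂`: a.s. both one-sided Cesàro averages of the stack heights equal `ρ̂`. -/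
def densS (μ : Measure XS) (ρ : ℝ) : Prop :=
  ∀ᵐ n ∂μ,
    Tendsto (fun N : ℕ => (∑ i ∈ Finset.range N, (n ((i : ℤ) + 1) : ℝ)) / (N : ℝ)) atTop (nhds ρ) ∧
    Tendsto (fun N : ℕ => (∑ i ∈ Finset.range N, (n (-(i : ℤ) - 1) : ℝ)) / (N : ℝ)) atTop (nhds ρ)

/-! ### Special sets of configurations -/

/-- Frozen F-SSEP configurations: no two adjacent occupied sites. -/
def frozenF : Set X := {η | ∀ i : ℤ, η i = false ∨ η (i + 1) = false}
/-- Frozen SSM configurations: every stack has height `0` or `1`. -/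
def frozenS : Set XS := {n | ∀ i : ℤ, n i ≤ 1}
/-- `X̂*`: no two adjacent short stacks. -/
def XstarS : Set XS := {n | ∀ i : ℤ, ¬(n i ≤ 1 ∧ n (i + 1) ≤ 1)}
/-- The even sector `X̂*_e`: all heights even, no two adjacent zeros. -/
def XeS : Set XS := {n | (∀ i : ℤ, Even (n i)) ∧ ∀ i : ℤ, ¬(n i = 0 ∧ n (i + 1) = 0)}
/-- `H = φ(X̂*)`: the F-SSEP configurations containing none of `000`, `0100`, `0010`, `01010`. -/
def Hset : Set X := {η | ∀ i : ℤ,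
  ¬(η i = false ∧ η (i+1) = false ∧ η (i+2) = false) ∧
  ¬(η i = false ∧ η (i+1) = true ∧ η (i+2) = false ∧ η (i+3) = false) ∧
  ¬(η i = false ∧ η (i+1) = false ∧ η (i+2) = true ∧ η (i+3) = false) ∧
  ¬(η i = false ∧ η (i+1) = true ∧ η (i+2) = false ∧ η (i+3) = true ∧ η (i+4) = false)}

/-- The height profile `h_η`, with `h_η(0) = 0` and increments `(-1)^{η(k)}`. -/
def hgt (η : X) (k : ℤ) : ℤ :=
  (∑ i ∈ Finset.Icc (1:ℤ) k, (if η i then (-1:ℤ) else 1)) -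
    (∑ i ∈ Finset.Icc (k + 1) (0:ℤ), (if η i then (-1:ℤ) else 1))

/-! ### The stationary path measure -/

/-- Finite-dimensional distributions of the stationary F-SSEP Markov chain started from `μ`. -/
def chain (μ : Measure X) : (n : ℕ) → Measure (Fin (n + 1) → X)
  | 0 => μ.map (fun η _ => η)
  | (n + 1) => (chain μ n).bind
      (fun path => (QF (path (Fin.last n))).map (fun η' => Fin.snoc path η'))

/-- `P` is the two-sided stationary path measure of the F-SSEP with one-time marginal `μ`. -/
def IsPathMeasure (μ : Measure X) (P : Measure (ℤ → X)) : Prop :=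
  IsProbabilityMeasure P ∧ ∀ (t : ℤ) (n : ℕ),
    P.map (fun ξ (k : Fin (n + 1)) => ξ (t + ((k : ℕ) : ℤ))) = chain μ n

/-! ### Bernoulli initial states and the time evolution -/

/-- An i.i.d. family of uniform `[0,1]` random variables extracted from a single uniform. -/
def unif01 (x : ℝ) (i : ℤ) : ℝ :=
  ∑' k : ℕ, if rbit (Nat.pair (Encodable.encode i) k) x then ((2:ℝ) ^ (k + 1))⁻¹ else 0

/-- The Bernoulli product measure of density `ρ` on `X`. -/
def bernoulliProd (ρ : ℝ) : Measure X :=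
  (volume.restrict (Set.Ioo (0:ℝ) 1)).map (fun x (i : ℤ) => decide (unif01 x i < ρ))

/-- `iterF μ t = μ Q^t`, the state at time `t` of the F-SSEP started from `μ`. -/
def iterF (μ : Measure X) : ℕ → Measure X
  | 0 => μ
  | (t + 1) => (iterF μ t).bind QF

/-- `S_η`: the sites `i` with `η(i-2) = η(i-1) = η(i) = 0`. -/
def Sset (η : X) : Set ℤ := {i | η (i - 2) = false ∧ η (i - 1) = false ∧ η i = false}

/-- The event that `t 0 < t 1 < ⋯ < t m` are consecutive points of `S_η`. -/
def renewEvent (t : ℕ → ℤ) (m : ℕ) : Set X :=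
  {η | (∀ j ≤ m, t j ∈ Sset η) ∧ ∀ x : ℤ, t 0 ≤ x → x ≤ t m → x ∈ Sset η → ∃ j ≤ m, t j = x}

/-! ### Substitution subshifts -/

/-- The smallest translation-invariant subset of `X` containing all configurations obtained
by the letterwise substitution `b ↦ w b`. -/
def substSet (w : Bool → List Bool) : Set X :=
  {η | ∃ (ζ : ℤ → Bool) (K : ℤ → ℤ),
    (∀ i : ℤ, K (i + 1) = K i + (w (ζ i)).length) ∧
    ∀ (i : ℤ) (j : ℕ) (h : j < (w (ζ i)).length), η (K i + (j : ℤ)) = (w (ζ i)).get ⟨j, h⟩}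

/-- The substitution `1 → 1100`, `0 → 10`. -/
def wLeft : Bool → List Bool := fun b => if b then [true, true, false, false] else [true, false]
/-- The substitution `1 → 0011`, `0 → 01`. -/
def wRight : Bool → List Bool := fun b => if b then [false, false, true, true] else [false, true]

/-- `X_left`. -/
def Xleft : Set X := substSet wLeft
/-- `X_right`. -/
def Xright : Set X := substSet wRight

/-- `X̂_left`: heights at most 2, a 2 is followed by a 0, a 0 is preceded by a 2. -/
def XSleft : Set XS :=
  {n | ∀ i : ℤ, n i ≤ 2 ∧ (n i = 2 → n (i + 1) = 0) ∧ (n i = 0 → n (i - 1) = 2)}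
/-- `X̂_right`: the spatial reflection of `X̂_left`. -/
def XSright : Set XS :=
  {n | ∀ i : ℤ, n i ≤ 2 ∧ (n i = 2 → n (i - 1) = 0) ∧ (n i = 0 → n (i + 1) = 2)}

/-! ### Ring measures and the grand canonical limit -/

/-- Admissible even ring configurations: all heights even, no two cyclically adjacent zeros. -/
def ringOK (L : ℕ) (n : ZMod (2 * L + 1) → ℕ) : Prop :=
  (∀ i, Even (n i)) ∧ ∀ i, ¬(n i = 0 ∧ n (i + 1) = 0)

/-- The grand canonical weight `ζ^{Σ n(i)} 4^{-z(n)}` of an admissible ring configuration. -/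
def ringW (ζ : ℝ) (L : ℕ) (n : ZMod (2 * L + 1) → ℕ) : ℝ≥0∞ :=
  if ringOK L n then
    (ENNReal.ofReal ζ) ^ (∑ i, n i) *
      ((4 : ℝ≥0∞) ^ (Finset.univ.filter (fun i => n i = 0)).card)⁻¹
  else 0

/-- The grand canonical measure `μ^(ζ,L)` on the ring of `2L+1` sites. -/
def muRing (ζ : ℝ) (L : ℕ) : Measure (ZMod (2 * L + 1) → ℕ) :=
  (∑' n, ringW ζ L n)⁻¹ • Measure.sum (fun n => ringW ζ L n • Measure.dirac n)

/-- The cylinder set in the ring determined by `m` on the window `[-K,K]`. -/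
def ringCyl (L K : ℕ) (m : ℤ → ℕ) : Set (ZMod (2 * L + 1) → ℕ) :=
  {n | ∀ i ∈ Finset.Icc (-(K : ℤ)) (K : ℤ), n ((i : ℤ) : ZMod (2 * L + 1)) = m i}

/-- The cylinder set in `X̂` determined by `m` on the window `[-K,K]`. -/
def cylS (K : ℕ) (m : ℤ → ℕ) : Set XS := {n | ∀ i ∈ Finset.Icc (-(K : ℤ)) (K : ℤ), n i = m i}

/-- `μ` is the weak limit `μ^(ζ,∞) = lim_L μ^(ζ,L)` (all cylinder probabilities converge). -/
def IsGCLimit (ζ : ℝ) (μ : Measure XS) : Prop :=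
  IsProbabilityMeasure μ ∧ ∀ (K : ℕ) (m : ℤ → ℕ),
    Tendsto (fun L : ℕ => muRing ζ L (ringCyl L K m)) atTop (nhds (μ (cylS K m)))

/-- `μ̂^(2)`: equal masses on the two configurations with alternating heights `0` and `2`. -/
def muHat2 : Measure XS :=
  (2 : ℝ≥0∞)⁻¹ • Measure.dirac (fun i : ℤ => if Even i then 2 else 0) +
    (2 : ℝ≥0∞)⁻¹ • Measure.dirac (fun i : ℤ => if Even i then 0 else 2)

/-- Mixing under the shift. -/
def MixingS (μ : Measure XS) : Prop :=
  ∀ A B : Set XS, MeasurableSet A → MeasurableSet B →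
    Tendsto (fun k : ℕ => μ (A ∩ shs^[k] ⁻¹' B)) atTop (nhds (μ A * μ B))

/-- Weak mixing under the shift. -/
def WeakMixS (μ : Measure XS) : Prop :=
  ∀ A B : Set XS, MeasurableSet A → MeasurableSet B →
    Tendsto (fun N : ℕ =>
      (∑ k ∈ Finset.range N,
        |(μ (A ∩ shs^[k] ⁻¹' B)).toReal - (μ A).toReal * (μ B).toReal|) / (N : ℝ))
      atTop (nhds 0)

/-- The Gibbs weight of `m` on the window `[a,b]`, for fugacity `ζ` and the one-body
potential `V(n) = 2 ln 2 · δ_{n,0}` (so `e^{-V(0)} = 1/4`). -/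
def gibbsW (ζ : ℝ) (a b : ℤ) (m : XS) : ℝ≥0∞ :=
  (ENNReal.ofReal ζ) ^ (∑ i ∈ Finset.Icc a b, m i) *
    ((4 : ℝ≥0∞) ^ ((Finset.Icc a b).filter (fun i => m i = 0)).card)⁻¹

/-- `μ` is a Gibbs state for fugacity `ζ` and one-body potential `V(n) = 2 ln 2 · δ_{n,0}`,
together with the hard constraints defining `X̂*_e` (DLR ratio condition). -/
def IsGibbsV (ζ : ℝ) (μ : Measure XS) : Prop :=
  μ XeSᶜ = 0 ∧ ∀ a b : ℤ, a ≤ b → ∀ m m' : XS, m ∈ XeS → m' ∈ XeS →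
    (∀ i : ℤ, i < a ∨ b < i → m i = m' i) →
    μ {n : XS | ∀ i ∈ Finset.Icc (a - 1) (b + 1), n i = m i} * gibbsW ζ a b m' =
      μ {n : XS | ∀ i ∈ Finset.Icc (a - 1) (b + 1), n i = m' i} * gibbsW ζ a b m

/-! ### The parity decomposition -/

/-- `γ(m,σ) = m + σ`. -/
def gam (p : XS × PS) : XS := fun i => p.1 i + (if p.2 i then 1 else 0)
/-- The inverse of `γ` (on `X̂*`): split a configuration into even part and parity. -/
def gamInv (n : XS) : XS × PS := (fun i => n i - n i % 2, fun i => decide (n i % 2 = 1))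
/-- Diagonal shift on `X̂ × S`. -/
def shP (p : XS × PS) : XS × PS := (shs p.1, shf p.2)
/-- The SSM dynamics acting on the first factor of `X̂ × S` and trivially on the second. -/
def QP (p : XS × PS) : Measure (XS × PS) := (QS p.1).map (fun m => (m, p.2))

/-- TIS state on `X̂*_e × S`. -/
def TIS_P (ν : Measure (XS × PS)) : Prop :=
  IsProbabilityMeasure ν ∧ ν.map shP = ν ∧ ν.bind QP = ν ∧ ν {p : XS × PS | p.1 ∉ XeS} = 0
/-- ETIS state on `X̂*_e × S`. -/
def ETIS_P (ν : Measure (XS × PS)) : Prop :=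
  TIS_P ν ∧ ∀ ν₁ ν₂ : Measure (XS × PS), TIS_P ν₁ → TIS_P ν₂ →
    ∀ p : ℝ≥0∞, 0 < p → p < 1 → ν = p • ν₁ + (1 - p) • ν₂ → ν₁ = ν

/-! ### The substitution bijection `Φ_φ` -/

/-- The starting position of the word substituted for the `i`-th letter (word `1` starts
at site `1`, and the word for `n(i)` is `0 1^{n(i)}`, of length `n(i) + 1`). -/
def Kst (n : XS) (i : ℤ) : ℤ :=
  1 + (∑ j ∈ Finset.Icc (1:ℤ) (i - 1), ((n j : ℤ) + 1)) -
    (∑ j ∈ Finset.Icc i (0:ℤ), ((n j : ℤ) + 1))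

/-- The substitution map `φ : X̂ → X`, replacing each height `n(i)` by `0 1^{n(i)}`. -/
def phiSub (n : XS) : X := fun x => if ∃ i : ℤ, Kst n i = x then false else true

/-- The normalization `Z_ν = Σ (k+1) ν({n(1) = k})`. -/
def Zsub (ν : Measure XS) : ℝ≥0∞ := ∑' k : ℕ, ((k : ℝ≥0∞) + 1) * ν {n : XS | n 1 = k}

/-- The bijection `Φ_φ` on regular TI measures induced by the substitution `φ`. -/
def Phi (ν : Measure XS) : Measure X :=
  (Zsub ν)⁻¹ • Measure.sum (fun p : (Σ k : ℕ, Fin (k + 1)) =>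
    (ν.restrict {n : XS | n 1 = p.1}).map (fun n (x : ℤ) => phiSub n (x + ((p.2 : ℕ) : ℤ))))

/-! ### Basic states -/

/-- The image `τ(A)` of a set of parity sequences under the shift. -/
def shiftSetP (A : Set PS) : Set PS := {σ | (fun i => σ (i + 1)) ∈ A}

/-- Cyclic successor in `Fin m`. -/
def finCycSucc {m : ℕ} (k : Fin m) : Fin m := ⟨(k.val + 1) % m, Nat.mod_lt _ k.pos⟩

/-- A `(λ,m)`-partition of `S`: pairwise disjoint, covering, cyclically permuted by the
shift (all modulo `λ`-null sets). -/
def IsCycPartition (lam : Measure PS) (m : ℕ) (A : Fin m → Set PS) : Prop :=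
  lam (⋃ k, A k)ᶜ = 0 ∧ (∀ k l, k ≠ l → lam (A k ∩ A l) = 0) ∧
    ∀ k, lam ((shiftSetP (A k) \ A (finCycSucc k)) ∪ (A (finCycSucc k) \ shiftSetP (A k))) = 0

/-- `ν^(q) = q⁻¹ Σ_{i<q} τ^{im}_* ν`. -/
def nuQ (ν : Measure XS) (q m : ℕ) : Measure XS :=
  ((q : ℝ≥0∞))⁻¹ • Measure.sum (fun i : Fin q => ν.map (shs^[(i : ℕ) * m]))

/-- The measure `μ̃^(λ,ν,A)` on `X̂*_e × S`, with `μ_σ = τ^k_* ν^(q)` for `σ ∈ A_k`. -/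
def mutilde (lam : Measure PS) (ν : Measure XS) (q m : ℕ) (A : Fin m → Set PS) :
    Measure (XS × PS) :=
  Measure.sum (fun k : Fin m => (((nuQ ν q m).map (shs^[(k : ℕ)])).prod (lam.restrict (A k))))

/-- `N_{ρ̂_e}`: stationary probability measures of the SSM supported on `X̂*_e` of
density `ρ̂_e` (not necessarily translation invariant). -/
def Nset (ρe : ℝ) : Set (Measure XS) :=
  {ν | IsProbabilityMeasure ν ∧ ν.bind QS = ν ∧ ν XeSᶜ = 0 ∧ densS ν ρe}

/-- `N̄_{ρ̂_e}`: the extreme points of `N_{ρ̂_e}`. -/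
def NExt (ρe : ℝ) : Set (Measure XS) :=
  {ν | ν ∈ Nset ρe ∧ ∀ ν₁ ν₂ : Measure XS, ν₁ ∈ Nset ρe → ν₂ ∈ Nset ρe →
    ∀ p : ℝ≥0∞, 0 < p → p < 1 → ν = p • ν₁ + (1 - p) • ν₂ → ν₁ = ν}

/-- `A'` is a proper refinement of `A` (modulo `λ`-null sets). -/
def ProperRefines (lam : Measure PS) {m m' : ℕ} (A' : Fin m' → Set PS) (A : Fin m → Set PS) :
    Prop :=
  m < m' ∧ ∀ j : Fin m', ∃ k : Fin m, lam (A' j \ A k) = 0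

/-- `μ` is an irreducible basic state of the SSM on `X̂*`. -/
def IsIrreducibleBasic (μ : Measure XS) : Prop :=
  ∃ (lam : Measure PS) (ρe : ℝ) (ν : Measure XS) (n m q : ℕ) (A : Fin m → Set PS),
    ErgF lam ∧ 1 ≤ ρe ∧ ν ∈ NExt ρe ∧
    0 < n ∧ ν.map (shs^[n]) = ν ∧ (∀ j : ℕ, 0 < j → j < n → ν.map (shs^[j]) ≠ ν) ∧
    n = q * m ∧ IsCycPartition lam m A ∧
    (¬ ∃ (m' : ℕ) (A' : Fin m' → Set PS),
      m' ∣ n ∧ IsCycPartition lam m' A' ∧ ProperRefines lam A' A) ∧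
    μ = (mutilde lam ν q m A).map gam

/-! Part 1 : Bool measurability helpers -/

section MeasBool
variable {α : Type*} [MeasurableSpace α]

lemma mset_true {f : α → Bool} (h : Measurable f) :
    MeasurableSet {a | f a = true} := h (measurableSet_singleton true)

lemma measurable_of_true {f : α → Bool} (h : MeasurableSet {a | f a = true}) :
    Measurable f := by
  apply measurable_to_countable'
  intro y
  cases y
  · have : f ⁻¹' {false} = {a | f a = true}ᶜ := by
      ext a; cases hfa : f a <;> simp [hfa]
    rw [this]; exact h.compl
  · exact h

lemma Measurable.band {f g : α → Bool} (hf : Measurable f) (hg : Measurable g) :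
    Measurable (fun a => f a && g a) := by
  apply measurable_of_true
  have : {a | (f a && g a) = true} = {a | f a = true} ∩ {a | g a = true} := by
    ext a; simp [Bool.and_eq_true]
  rw [this]; exact (mset_true hf).inter (mset_true hg)

lemma Measurable.bor {f g : α → Bool} (hf : Measurable f) (hg : Measurable g) :
    Measurable (fun a => f a || g a) := by
  apply measurable_of_true
  have : {a | (f a || g a) = true} = {a | f a = true} ∪ {a | g a = true} := by
    ext a; simp [Bool.or_eq_true]
  rw [this]; exact (mset_true hf).union (mset_true hg)

lemma Measurable.bnot {f : α → Bool} (hf : Measurable f) :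
    Measurable (fun a => !(f a)) := by
  apply measurable_of_true
  have : {a | (!(f a)) = true} = {a | f a = true}ᶜ := by
    ext a; cases hfa : f a <;> simp [hfa]
  rw [this]; exact (mset_true hf).compl

end MeasBool

/-! Part 2 : coin facts -/

lemma measurable_rbit (m : ℕ) : Measurable (rbit m) := by
  apply measurable_of_true
  have : {x : ℝ | rbit m x = true} = (fun x : ℝ => ⌊x * 2 ^ (m + 1)⌋) ⁻¹' {k : ℤ | k % 2 = 1} := by
    ext x; simp [rbit]
  rw [this]
  exact (Int.measurable_floor.comp (measurable_id.mul_const _)) (by trivial)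

lemma measurable_coinfun :
    Measurable (fun x (i : ℤ) => rbit (Encodable.encode i) x) :=
  measurable_pi_lambda _ (fun i => measurable_rbit _)

instance : IsProbabilityMeasure (volume.restrict (Set.Ioo (0:ℝ) 1)) := by
  constructor
  rw [Measure.restrict_apply_univ, Real.volume_Ioo]
  norm_num

instance coin_prob : IsProbabilityMeasure coin :=
  Measure.isProbabilityMeasure_map measurable_coinfun.aemeasurable

lemma coin_apply {s : Set (ℤ → Bool)} (hs : MeasurableSet s) :
    coin s = volume ({x | (fun i : ℤ => rbit (Encodable.encode i) x) ∈ s} ∩ Set.Ioo (0:ℝ) 1) := by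
  rw [coin, Measure.map_apply measurable_coinfun hs,
    Measure.restrict_apply (measurable_coinfun hs)]
  rfl

def eps (h : ℤ) : ℝ≥0∞ := ENNReal.ofReal (((2:ℝ) ^ (Encodable.encode h + 1))⁻¹)

lemma eps_pos (h : ℤ) : 0 < eps h := by
  rw [eps, ENNReal.ofReal_pos]; positivity

lemma eps_lt_one (h : ℤ) : eps h < 1 := by
  rw [eps]
  calc ENNReal.ofReal (((2:ℝ) ^ (Encodable.encode h + 1))⁻¹)
      ≤ ENNReal.ofReal (2⁻¹ : ℝ) := by
        apply ENNReal.ofReal_le_ofReal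
        apply inv_anti₀ (by norm_num)
        calc (2:ℝ) = 2^1 := (pow_one 2).symm
        _ ≤ 2 ^ (Encodable.encode h + 1) := by
          apply pow_le_pow_right₀ (by norm_num); omega
  _ < 1 := by rw [← ENNReal.ofReal_one]; apply (ENNReal.ofReal_lt_ofReal_iff (by norm_num)).mpr; norm_num

lemma measurable_coin_coord (h : ℤ) (b : Bool) : MeasurableSet {α : ℤ → Bool | α h = b} :=
  show MeasurableSet ((fun α : ℤ → Bool => α h) ⁻¹' {b}) from
    (measurable_pi_apply h) (measurableSet_singleton b)

lemma coin_coord_le (h : ℤ) (b : Bool) : coin {α | α h = b} ≤ 1 - eps h := by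
  set m := Encodable.encode h with hm
  set ε : ℝ := ((2:ℝ) ^ (m + 1))⁻¹ with hε
  have hε0 : 0 < ε := by positivity
  have hpow : (2:ℝ) ≤ 2 ^ (m+1) := by
    calc (2:ℝ) = 2^1 := (pow_one 2).symm
    _ ≤ 2 ^ (m + 1) := by apply pow_le_pow_right₀ (by norm_num); omega
  have hεone : ε ≤ 2⁻¹ := by rw [hε]; exact inv_anti₀ (by norm_num) hpow
  have hεmul : ε * 2 ^ (m+1) = 1 := by rw [hε]; field_simp
  obtain ⟨J, hJsub, hJval, hJvol⟩ :
      ∃ J : Set ℝ, J ⊆ Set.Ioo (0:ℝ) 1 ∧ (∀ x ∈ J, rbit m x = !b) ∧ eps h ≤ volume J := by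
    rcases b with _ | _
    · -- b = false : take (ε, 2ε), where rbit = true
      refine ⟨Set.Ioo ε (2*ε), ?_, ?_, ?_⟩
      · intro x hx
        refine ⟨lt_trans hε0 hx.1, lt_of_lt_of_le hx.2 (by linarith)⟩
      · intro x hx
        have hfl : ⌊x * 2 ^ (m+1)⌋ = 1 := by
          rw [Int.floor_eq_iff]
          push_cast
          constructor
          · nlinarith [hx.1, hεmul]
          · nlinarith [hx.2, hεmul]
        simp [rbit, hfl]
      · rw [Real.volume_Ioo]
        apply le_of_eq
        rw [eps, ← hm, ← hε]
        congr 1; ring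
    · -- b = true : take (0, ε), where rbit = false
      refine ⟨Set.Ioo 0 ε, ?_, ?_, ?_⟩
      · intro x hx
        exact ⟨hx.1, lt_of_lt_of_le hx.2 (by linarith)⟩
      · intro x hx
        have hfl : ⌊x * 2 ^ (m+1)⌋ = 0 := by
          rw [Int.floor_eq_zero_iff]
          refine ⟨le_of_lt (mul_pos hx.1 (by positivity)), ?_⟩
          nlinarith [hx.2, hεmul]
        simp [rbit, hfl]
      · rw [Real.volume_Ioo]
        apply le_of_eq
        rw [eps, ← hm, ← hε]
        congr 1; ring
  have hmeas : MeasurableSet {x : ℝ | rbit m x = b} := by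
    rcases b with _ | _
    · have : {x : ℝ | rbit m x = false} = {x | rbit m x = true}ᶜ := by
        ext x; cases hfa : rbit m x <;> simp [hfa]
      rw [this]; exact (mset_true (measurable_rbit m)).compl
    · exact mset_true (measurable_rbit m)
  have key : coin {α | α h = b} = volume ({x | rbit m x = b} ∩ Set.Ioo (0:ℝ) 1) := by
    rw [coin_apply (measurable_coin_coord h b)]; rfl
  have hJdisj : J ⊆ ({x | rbit m x = b} ∩ Set.Ioo (0:ℝ) 1)ᶜ := by
    intro x hx
    simp only [Set.mem_compl_iff, Set.mem_inter_iff, not_and]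
    intro hxb
    exfalso
    have := hJval x hx
    rw [hxb] at this
    cases b <;> simp at this
  have hadd : volume ({x | rbit m x = b} ∩ Set.Ioo (0:ℝ) 1) + eps h ≤ 1 := by
    calc volume ({x | rbit m x = b} ∩ Set.Ioo (0:ℝ) 1) + eps h
        ≤ volume ({x | rbit m x = b} ∩ Set.Ioo (0:ℝ) 1) + volume J := add_le_add le_rfl hJvol
    _ ≤ volume ({x | rbit m x = b} ∩ Set.Ioo (0:ℝ) 1)
          + volume (Set.Ioo (0:ℝ) 1 \ ({x | rbit m x = b} ∩ Set.Ioo (0:ℝ) 1)) := by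
          refine add_le_add le_rfl (measure_mono ?_)
          intro x hx
          exact ⟨hJsub hx, fun hc => (hJdisj hx) hc⟩
    _ = volume (Set.Ioo (0:ℝ) 1 ∩ ({x | rbit m x = b} ∩ Set.Ioo (0:ℝ) 1))
          + volume (Set.Ioo (0:ℝ) 1 \ ({x | rbit m x = b} ∩ Set.Ioo (0:ℝ) 1)) := by
          congr 1
          rw [Set.inter_eq_right.mpr Set.inter_subset_right]
    _ = volume (Set.Ioo (0:ℝ) 1) := measure_inter_add_diff _ (hmeas.inter measurableSet_Ioo)
    _ = 1 := by rw [Real.volume_Ioo]; norm_num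
  rw [key]
  exact ENNReal.le_sub_of_add_le_right (by rw [eps]; exact ENNReal.ofReal_ne_top) hadd

lemma one_sub_eps_lt_one (h : ℤ) : 1 - eps h < 1 :=
  ENNReal.sub_lt_self ENNReal.one_ne_top one_ne_zero (eps_pos h).ne'

lemma one_sub_eps_pos (h : ℤ) : 0 < 1 - eps h := by
  apply tsub_pos_of_lt (eps_lt_one h)

lemma measurable_fstep_pair : Measurable (fun q : X × (ℤ → Bool) => fstep q.1 q.2) := by
  have h1 : ∀ j : ℤ, Measurable (fun q : X × (ℤ → Bool) => q.1 j) :=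
    fun j => (measurable_pi_apply j).comp measurable_fst
  have h2 : ∀ j : ℤ, Measurable (fun q : X × (ℤ → Bool) => q.2 j) :=
    fun j => (measurable_pi_apply j).comp measurable_snd
  apply measurable_pi_lambda
  intro i
  simp only [fstep, jumpsR, jumpsL, wantsR, wantsL]
  repeat'
    first
      | exact h1 _
      | exact h2 _
      | apply Measurable.band
      | apply Measurable.bor
      | apply Measurable.bnot

lemma measurable_fstep (η : X) : Measurable (fstep η) :=
  measurable_fstep_pair.comp (measurable_const.prodMk measurable_id)

lemma QF_apply (η : X) {s : Set X} (hs : MeasurableSet s) :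
    QF η s = coin (fstep η ⁻¹' s) :=
  Measure.map_apply (measurable_fstep η) hs

instance QF_prob (η : X) : IsProbabilityMeasure (QF η) :=
  Measure.isProbabilityMeasure_map (measurable_fstep η).aemeasurable

section Chain

variable {n : ℕ}

lemma measurable_snoc :
    Measurable (fun q : (Fin (n+1) → X) × X => (Fin.snoc q.1 q.2 : Fin (n+2) → X)) := by
  apply measurable_pi_lambda
  intro k
  induction k using Fin.lastCases with
  | last => simp only [Fin.snoc_last]; exact measurable_snd
  | cast j => simp only [Fin.snoc_castSucc]; exact (measurable_pi_apply j).comp measurable_fst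

/-- the one-step full transition map -/
def Gmap (n : ℕ) (q : (Fin (n+1) → X) × (ℤ → Bool)) : Fin (n+2) → X :=
  Fin.snoc q.1 (fstep (q.1 (Fin.last n)) q.2)

lemma measurable_Gmap : Measurable (Gmap n) :=
  measurable_snoc.comp (measurable_fst.prodMk (measurable_fstep_pair.comp
    (((measurable_pi_apply (Fin.last n)).comp measurable_fst).prodMk measurable_snd)))

lemma measurable_Gmap_fixed (p : Fin (n+1) → X) : Measurable (fun α => Gmap n (p, α)) :=
  measurable_Gmap.comp (measurable_const.prodMk measurable_id)

lemma kernel_formula (p : Fin (n+1) → X) :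
    (QF (p (Fin.last n))).map (fun η' => (Fin.snoc p η' : Fin (n+2) → X)) =
      coin.map (fun α => Gmap n (p, α)) := by
  have hsnocp : Measurable (fun η' : X => (Fin.snoc p η' : Fin (n+2) → X)) :=
    measurable_snoc.comp (measurable_const.prodMk measurable_id)
  rw [QF, Measure.map_map hsnocp (measurable_fstep _)]
  rfl

lemma measurable_kernel :
    Measurable (fun p : Fin (n+1) → X =>
      (QF (p (Fin.last n))).map (fun η' => (Fin.snoc p η' : Fin (n+2) → X))) := by
  apply Measure.measurable_of_measurable_coe
  intro s hs
  have heq : ∀ p : Fin (n+1) → X,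
      ((QF (p (Fin.last n))).map (fun η' => (Fin.snoc p η' : Fin (n+2) → X))) s
        = coin (Prod.mk p ⁻¹' (Gmap n ⁻¹' s)) := by
    intro p
    rw [kernel_formula, Measure.map_apply (measurable_Gmap_fixed p) hs]
    rfl
  simp_rw [heq]
  exact measurable_measure_prodMk_left (measurable_Gmap hs)

lemma measurable_expand : Measurable (fun (η : X) (_ : Fin 1) => η) :=
  measurable_pi_lambda _ (fun _ => measurable_id)

lemma chain_zero_apply (μ : Measure X) {s : Set (Fin 1 → X)} (hs : MeasurableSet s) :
    chain μ 0 s = μ ((fun η (_ : Fin 1) => η) ⁻¹' s) :=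
  Measure.map_apply measurable_expand hs

lemma chain_succ_apply (μ : Measure X) (n : ℕ) {s : Set (Fin (n+2) → X)}
    (hs : MeasurableSet s) :
    chain μ (n+1) s
      = ∫⁻ p, coin {α | Fin.snoc p (fstep (p (Fin.last n)) α) ∈ s} ∂ chain μ n := by
  show ((chain μ n).bind _) s = _
  rw [Measure.bind_apply hs measurable_kernel.aemeasurable]
  congr 1
  funext p
  rw [kernel_formula, Measure.map_apply (measurable_Gmap_fixed p) hs]
  rfl

lemma chain_succ_lintegral (μ : Measure X) (n : ℕ) {g : (Fin (n+2) → X) → ℝ≥0∞}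
    (hg : Measurable g) :
    ∫⁻ q, g q ∂ chain μ (n+1)
      = ∫⁻ p, ∫⁻ α, g (Fin.snoc p (fstep (p (Fin.last n)) α)) ∂coin ∂ chain μ n := by
  show ∫⁻ q, g q ∂ ((chain μ n).bind _) = _
  rw [Measure.lintegral_bind measurable_kernel.aemeasurable hg.aemeasurable]
  congr 1
  funext p
  rw [kernel_formula, lintegral_map hg (measurable_Gmap_fixed p)]
  rfl

lemma chain_prob (μ : Measure X) (hμ : IsProbabilityMeasure μ) (n : ℕ) :
    IsProbabilityMeasure (chain μ n) := by
  induction n with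
  | zero => exact Measure.isProbabilityMeasure_map measurable_expand.aemeasurable
  | succ n ih =>
    constructor
    rw [chain_succ_apply μ n MeasurableSet.univ]
    have : ∀ p : Fin (n+1) → X,
        coin {α | Fin.snoc p (fstep (p (Fin.last n)) α) ∈ (Set.univ : Set (Fin (n+2) → X))}
          = 1 := by
      intro p
      have : {α : ℤ → Bool |
          Fin.snoc p (fstep (p (Fin.last n)) α) ∈ (Set.univ : Set (Fin (n+2) → X))}
          = Set.univ := by ext α; simp
      rw [this]
      exact measure_univ
    simp_rw [this]
    rw [lintegral_one]
    exact measure_univ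
end Chain
/-! Part 5 : one-step Boolean lemmas -/

lemma fstep_eval (η : X) (α : ℤ → Bool) (i : ℤ) : fstep η α i =
    ((η i
        && !((η i && η (i-1) && !η (i+1)) && (!(η (i+2) && η (i+3) && !η (i+1)) || α (i+1)))
        && !((η i && η (i+1) && !η (i-1)) && (!(η (i-2) && η (i-3) && !η (i-1)) || !(α (i-1)))))
      || ((η (i-1) && η (i-2) && !η i) && (!(η (i+1) && η (i+2) && !η i) || α i))
      || ((η (i+1) && η (i+2) && !η i) && (!(η (i-1) && η (i-2) && !η i) || !(α i)))) := by
  have e1 : i - 1 - 1 = i - 2 := by ring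
  have e2 : i - 1 + 1 = i := by ring
  have e3 : i - 1 + 2 = i + 1 := by ring
  have e4 : i + 1 - 1 = i := by ring
  have e5 : i + 1 + 1 = i + 2 := by ring
  have e6 : i + 2 + 1 = i + 3 := by ring
  have e7 : i + 2 - 1 = i + 1 := by ring
  have e8 : i - 2 - 1 = i - 3 := by ring
  have e9 : i - 2 + 1 = i - 1 := by ring
  have e10 : i + 1 - 2 = i - 1 := by ring
  simp only [fstep, jumpsR, jumpsL, wantsR, wantsL, e1, e2, e3, e4, e5, e6, e7, e8, e9, e10]

lemma bool_R1 : ∀ u v w x a : Bool,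
    (((w && x && !false) && (!(u && v && !false) || a)) = false) →
    (((u && v && !false) && (!(w && x && !false) || !a)) = false) →
    (u = false ∨ v = false) ∧ (w = false ∨ x = false) := by decide

/-- If site `j` is empty and stays empty, neither adjacent pair pointing at it is `11`. -/
lemma step_R1 (η : X) (α : ℤ → Bool) (j : ℤ) (h0 : η j = false)
    (h1 : fstep η α j = false) :
    (η (j+1) = false ∨ η (j+2) = false) ∧ (η (j-1) = false ∨ η (j-2) = false) := by
  rw [fstep_eval] at h1
  rw [Bool.or_eq_false_iff] at h1
  obtain ⟨h1', hD⟩ := h1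
  rw [Bool.or_eq_false_iff] at h1'
  obtain ⟨-, hC⟩ := h1'
  rw [h0] at hC hD
  exact bool_R1 _ _ _ _ _ hC hD

/-- An isolated particle stays put. -/
lemma step_iso (η : X) (α : ℤ → Bool) (p : ℤ) (h0 : η (p-1) = false)
    (h1 : η p = true) (h2 : η (p+1) = false) : fstep η α p = true := by
  rw [fstep_eval, h0, h1, h2]
  simp

/-- Survival of the left edge of a block with a hole to its left forces the coin. -/
lemma step_blockL (η : X) (α : ℤ → Bool) (L : ℤ) (hL : η L = true)
    (hL1 : η (L+1) = true) (hole : η (L-1) = false)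
    (hsurv : fstep η α L = true) : α (L-1) = true := by
  rw [fstep_eval, hL, hL1, hole] at hsurv
  simp only [Bool.not_false, Bool.not_true, Bool.false_and, Bool.and_false, Bool.true_and,
    Bool.and_true, Bool.or_false, Bool.false_or] at hsurv
  rcases hw : η (L-2) <;> rcases hx : η (L-3) <;> rcases ha : α (L-1) <;>
    simp_all

/-- Survival of the right edge of a block with a hole to its right forces the coin. -/
lemma step_blockR (η : X) (α : ℤ → Bool) (R : ℤ) (hR : η R = true)
    (hR1 : η (R-1) = true) (hole : η (R+1) = false)
    (hsurv : fstep η α R = true) : α (R+1) = false := by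
  rw [fstep_eval, hR, hR1, hole] at hsurv
  simp only [Bool.not_false, Bool.not_true, Bool.false_and, Bool.and_false, Bool.true_and,
    Bool.and_true, Bool.or_false, Bool.false_or] at hsurv
  rcases hw : η (R+2) <;> rcases hx : η (R+3) <;> rcases ha : α (R+1) <;>
    simp_all

/-- The conjunction of one-step relations that hold surely along the dynamics. -/
def Rel (η η' : X) : Prop := ∀ j : ℤ,
  (η j = false → η' j = false →
    (η (j+1) = false ∨ η (j+2) = false) ∧ (η (j-1) = false ∨ η (j-2) = false))
  ∧ (η (j-1) = false → η j = true → η (j+1) = false → η' j = true)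

lemma rel_fstep (η : X) (α : ℤ → Bool) : Rel η (fstep η α) := by
  intro j
  exact ⟨fun h0 h1 => step_R1 η α j h0 h1, fun h0 h1 h2 => step_iso η α j h0 h1 h2⟩
def Wmap (t : ℤ) (n : ℕ) : (ℤ → X) → (Fin (n+1) → X) := fun ξ k => ξ (t + ((k : ℕ) : ℤ))

lemma measurable_Wmap (t : ℤ) (n : ℕ) : Measurable (Wmap t n) :=
  measurable_pi_lambda _ fun k => measurable_pi_apply _

def shPath (T : ℤ) : (ℤ → X) → (ℤ → X) := fun ξ t => ξ (t + T)

lemma measurable_shPath (T : ℤ) : Measurable (shPath T) :=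
  measurable_pi_lambda _ fun t => measurable_pi_apply _

section PathM
variable {μ : Measure X} {P : Measure (ℤ → X)}

lemma marg (hP : IsPathMeasure μ P) (t : ℤ) (n : ℕ) {S : Set (Fin (n+1) → X)}
    (hS : MeasurableSet S) : P (Wmap t n ⁻¹' S) = chain μ n S :=
  calc P (Wmap t n ⁻¹' S) = (P.map (Wmap t n)) S :=
        (Measure.map_apply (measurable_Wmap t n) hS).symm
  _ = chain μ n S := by
        rw [show Wmap t n = (fun ξ (k : Fin (n+1)) => ξ (t + ((k : ℕ) : ℤ))) from rfl, hP.2 t n]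

lemma exists_window (I : Finset ℤ) : ∃ (t0 : ℤ) (n : ℕ), ∀ i ∈ I, t0 ≤ i ∧ i ≤ t0 + n := by
  set N : ℕ := I.sup (fun i => i.natAbs) with hN
  refine ⟨-(N : ℤ), 2 * N, fun i hi => ?_⟩
  have h1 := Finset.le_sup (f := fun i : ℤ => i.natAbs) hi
  have h2 : i.natAbs ≤ N := by rw [hN]; simpa using h1
  omega

lemma window_proj (I : Finset ℤ) {t0 : ℤ} {n : ℕ} (hw : ∀ i ∈ I, t0 ≤ i ∧ i ≤ t0 + n) :
    ∃ proj : (Fin (n+1) → X) → (∀ _ : I, X),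
      Measurable proj ∧ ∀ t : ℤ, ∀ S : Set (∀ _ : I, X),
        (MeasureTheory.cylinder I S : Set (ℤ → X)) = Wmap t0 n ⁻¹' (proj ⁻¹' S) := by
  have hidx : ∀ i : I, ((i : ℤ) - t0).toNat < n + 1 := by
    intro i
    have := hw i i.2
    omega
  refine ⟨fun p i => p ⟨((i : ℤ) - t0).toNat, hidx i⟩, ?_, ?_⟩
  · exact measurable_pi_lambda _ fun i => measurable_pi_apply _
  · intro t S
    have hfun : (fun p : Fin (n+1) → X => fun i : I => p ⟨((i : ℤ) - t0).toNat, hidx i⟩)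
        ∘ Wmap t0 n = I.restrict := by
      funext ξ i
      have hwi := hw i i.2
      have harith : t0 + ((((i : ℤ) - t0).toNat : ℕ) : ℤ) = (i : ℤ) := by omega
      show ξ (t0 + ((((i : ℤ) - t0).toNat : ℕ) : ℤ)) = ξ i
      rw [harith]
    show (Finset.restrict (π := fun _ : ℤ => X) I) ⁻¹' S = _
    rw [← Set.preimage_comp, hfun]

lemma path_shift_inv (hP : IsPathMeasure μ P) (T : ℤ) : P.map (shPath T) = P := by
  have hPp : IsProbabilityMeasure P := hP.1
  have hmp : IsProbabilityMeasure (P.map (shPath T)) :=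
    Measure.isProbabilityMeasure_map (measurable_shPath T).aemeasurable
  refine ext_of_generate_finite _ generateFrom_measurableCylinders.symm
    isPiSystem_measurableCylinders ?_ (by simp [measure_univ])
  intro s hs
  obtain ⟨I, S, hS, rfl⟩ := (mem_measurableCylinders s).1 hs
  obtain ⟨t0, n, hw⟩ := exists_window I
  obtain ⟨proj, hproj, hcyl⟩ := window_proj I hw
  have hS' : MeasurableSet (proj ⁻¹' S) := hproj hS
  have hmeas_cyl : MeasurableSet (MeasureTheory.cylinder (α := fun _ : ℤ => X) I S) :=
    by rw [hcyl t0 S]; exact (measurable_Wmap t0 n) hS'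
  rw [Measure.map_apply (measurable_shPath T) hmeas_cyl]
  have key : shPath T ⁻¹' (MeasureTheory.cylinder I S) = Wmap (t0 + T) n ⁻¹' (proj ⁻¹' S) := by
    rw [hcyl t0 S]
    have : Wmap t0 n ∘ shPath T = Wmap (t0 + T) n := by
      funext ξ k
      show ξ (t0 + ((k : ℕ) : ℤ) + T) = ξ (t0 + T + ((k : ℕ) : ℤ))
      congr 1; ring
    rw [← this, Set.preimage_comp]
  rw [key, marg hP (t0 + T) n hS', hcyl t0 S, marg hP t0 n hS']

lemma P_shift_apply (hP : IsPathMeasure μ P) (T : ℤ) {A : Set (ℤ → X)}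
    (hA : MeasurableSet A) : P (shPath T ⁻¹' A) = P A := by
  conv_rhs => rw [← path_shift_inv hP T]
  rw [Measure.map_apply (measurable_shPath T) hA]

/-! measurability of the Rel set -/

lemma measurable_eval2 {N : ℕ} (k : Fin N) (j : ℤ) :
    Measurable (fun p : Fin N → X => p k j) :=
  (measurable_pi_apply j).comp (measurable_pi_apply k)

lemma mset_eval2 {N : ℕ} (k : Fin N) (j : ℤ) (b : Bool) :
    MeasurableSet {p : Fin N → X | p k j = b} :=
  show MeasurableSet ((fun p : Fin N → X => p k j) ⁻¹' {b}) from
    (measurable_eval2 k j) (measurableSet_singleton b)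

lemma mset_rel : MeasurableSet {p : Fin 2 → X | Rel (p 0) (p 1)} := by
  have : {p : Fin 2 → X | Rel (p 0) (p 1)} = ⋂ j : ℤ,
      ((({p : Fin 2 → X | p 0 j = false} ∩ {p | p 1 j = false})ᶜ ∪
        (({p : Fin 2 → X | p 0 (j+1) = false} ∪ {p | p 0 (j+2) = false}) ∩
         ({p : Fin 2 → X | p 0 (j-1) = false} ∪ {p | p 0 (j-2) = false}))) ∩
       (({p : Fin 2 → X | p 0 (j-1) = false} ∩ {p | p 0 j = true} ∩
          {p | p 0 (j+1) = false})ᶜ ∪ {p | p 1 j = true})) := by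
    ext p
    simp only [Set.mem_iInter, Set.mem_inter_iff, Set.mem_union, Set.mem_compl_iff,
      Set.mem_setOf_eq, Rel, not_and]
    constructor
    · intro h j
      have := h j
      tauto
    · intro h j
      have := h j
      tauto
  rw [this]
  exact MeasurableSet.iInter fun j =>
    (((( mset_eval2 0 j false).inter (mset_eval2 1 j false)).compl.union
      (((mset_eval2 0 (j+1) false).union (mset_eval2 0 (j+2) false)).inter
       ((mset_eval2 0 (j-1) false).union (mset_eval2 0 (j-2) false)))).inter
     ((((mset_eval2 0 (j-1) false).inter (mset_eval2 0 j true)).inter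
        (mset_eval2 0 (j+1) false)).compl.union (mset_eval2 1 j true)))

lemma rel_as (hP : IsPathMeasure μ P) :
    P {ξ : ℤ → X | ∃ t : ℤ, ¬ Rel (ξ t) (ξ (t+1))} = 0 := by
  have hcover : {ξ : ℤ → X | ∃ t : ℤ, ¬ Rel (ξ t) (ξ (t+1))}
      = ⋃ t : ℤ, Wmap t 1 ⁻¹' {p : Fin 2 → X | Rel (p 0) (p 1)}ᶜ := by
    ext ξ
    simp only [Set.mem_setOf_eq, Set.mem_iUnion, Set.mem_preimage, Set.mem_compl_iff, Wmap]
    constructor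
    · rintro ⟨t, ht⟩
      refine ⟨t, ?_⟩
      simpa using ht
    · rintro ⟨t, ht⟩
      refine ⟨t, ?_⟩
      simpa using ht
  rw [hcover]
  apply measure_iUnion_null
  intro t
  rw [marg hP t 1 mset_rel.compl]
  rw [chain_succ_apply μ 0 mset_rel.compl]
  have hz : ∀ p : Fin 1 → X,
      {α : ℤ → Bool | Fin.snoc p (fstep (p (Fin.last 0)) α) ∈
        {p : Fin 2 → X | Rel (p 0) (p 1)}ᶜ} = ∅ := by
    intro p
    ext α
    simp only [Set.mem_setOf_eq, Set.mem_compl_iff, Set.mem_empty_iff_false, iff_false,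
      not_not]
    have h0 : (Fin.snoc p (fstep (p (Fin.last 0)) α) : Fin 2 → X) 0 = p 0 := by
      have : (0 : Fin 2) = Fin.castSucc (0 : Fin 1) := rfl
      rw [this, Fin.snoc_castSucc]
    have h1 : (Fin.snoc p (fstep (p (Fin.last 0)) α) : Fin 2 → X) 1 = fstep (p (Fin.last 0)) α := by
      have : (1 : Fin 2) = Fin.last 1 := rfl
      rw [this, Fin.snoc_last]
    rw [h0, h1]
    have : p (Fin.last 0) = p 0 := rfl
    rw [this]
    exact rel_fstep (p 0) α
  simp_rw [hz]
  simp
end PathM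
/-! Part 7 : deterministic trajectory lemmas -/

section Traj
variable {ξ : ℤ → X} (hrel : ∀ t : ℤ, Rel (ξ t) (ξ (t+1)))

lemma bool_tt {b : Bool} (h : ¬ b = false) : b = true := by
  cases b
  · exact absurd rfl h
  · rfl

include hrel in
/-- a particle parked next to a frozen empty site parks forever -/
lemma traj_park_right {j t1 : ℤ} (hfz : ∀ t, t1 ≤ t → ξ t j = false)
    (htt : ξ t1 (j+1) = true) :
    ∀ t, t1 ≤ t → ξ t (j+1) = true ∧ ξ t (j+2) = false := by
  refine Int.le_induction ?_ ?_
  · refine ⟨htt, ?_⟩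
    have h1 := ((hrel t1) j).1 (hfz t1 le_rfl) (hfz (t1+1) (by omega))
    rcases h1.1 with h | h
    · rw [htt] at h; exact absurd h (by simp)
    · exact h
  · intro t ht IH
    have hpark : ξ (t+1) (j+1) = true := by
      have h2 := ((hrel t) (j+1)).2
      have e : j + 1 - 1 = j := by ring
      rw [e] at h2
      exact h2 (hfz t ht) IH.1 (by rw [show j+1+1 = j+2 by ring]; exact IH.2)
    refine ⟨hpark, ?_⟩
    have h1 := ((hrel (t+1)) j).1 (hfz (t+1) (by omega)) (hfz (t+1+1) (by omega))
    rcases h1.1 with h | h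
    · rw [hpark] at h; exact absurd h (by simp)
    · exact h

include hrel in
lemma traj_park_left {j t1 : ℤ} (hfz : ∀ t, t1 ≤ t → ξ t j = false)
    (htt : ξ t1 (j-1) = true) :
    ∀ t, t1 ≤ t → ξ t (j-1) = true ∧ ξ t (j-2) = false := by
  refine Int.le_induction ?_ ?_
  · refine ⟨htt, ?_⟩
    have h1 := ((hrel t1) j).1 (hfz t1 le_rfl) (hfz (t1+1) (by omega))
    rcases h1.2 with h | h
    · rw [htt] at h; exact absurd h (by simp)
    · exact h
  · intro t ht IH
    have hpark : ξ (t+1) (j-1) = true := by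
      have h2 := ((hrel t) (j-1)).2
      have e : j - 1 + 1 = j := by ring
      rw [e] at h2
      exact h2 (by rw [show j-1-1 = j-2 by ring]; exact IH.2) IH.1 (hfz t ht)
    refine ⟨hpark, ?_⟩
    have h1 := ((hrel (t+1)) j).1 (hfz (t+1) (by omega)) (hfz (t+1+1) (by omega))
    rcases h1.2 with h | h
    · rw [hpark] at h; exact absurd h (by simp)
    · exact h

include hrel in
lemma traj_right : ∀ (k : ℕ) (j T0 : ℤ), (∀ t, T0 ≤ t → ξ t j = false) →
    ∃ T, T0 ≤ T ∧ ∀ t, T ≤ t → ∀ m, j ≤ m → m < j + k →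
      ¬(ξ t m = true ∧ ξ t (m+1) = true) := by
  intro k
  induction k using Nat.strong_induction_on with
  | _ k IH =>
  intro j T0 hfz
  rcases Nat.eq_zero_or_pos k with hk | hk
  · exact ⟨T0, le_rfl, fun t ht m hm1 hm2 => absurd hm2 (by subst hk; push_cast; omega)⟩
  by_cases hc : ∀ t, T0 ≤ t → ξ t (j+1) = false
  · obtain ⟨T, hT, hT2⟩ := IH (k-1) (by omega) (j+1) T0 hc
    refine ⟨T, hT, fun t ht m hm1 hm2 => ?_⟩
    rcases eq_or_lt_of_le hm1 with rfl | hml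
    · rintro ⟨c1, -⟩
      rw [hfz t (le_trans hT ht)] at c1
      exact absurd c1 (by simp)
    · exact hT2 t ht m (by omega) (by push_cast at hm2 ⊢; omega)
  · push_neg at hc
    obtain ⟨t1, ht1T, ht1⟩ := hc
    have htt : ξ t1 (j+1) = true := bool_tt ht1
    have hfz1 : ∀ t, t1 ≤ t → ξ t j = false := fun t ht => hfz t (by omega)
    have hpark := traj_park_right hrel hfz1 htt
    rcases Nat.lt_or_ge k 2 with hk2 | hk2
    · -- k = 1
      refine ⟨T0, le_rfl, fun t ht m hm1 hm2 => ?_⟩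
      have hmj : m = j := by push_cast at hm2; omega
      subst hmj
      rintro ⟨c1, -⟩
      rw [hfz t ht] at c1
      exact absurd c1 (by simp)
    · have hfz2 : ∀ t, t1 ≤ t → ξ t (j+2) = false := fun t ht => (hpark t ht).2
      obtain ⟨T, hTt1, hT2⟩ := IH (k-2) (by omega) (j+2) t1 hfz2
      refine ⟨T, by omega, fun t ht m hm1 hm2 => ?_⟩
      rcases eq_or_lt_of_le hm1 with rfl | hml
      · rintro ⟨c1, -⟩
        rw [hfz t (by omega)] at c1
        exact absurd c1 (by simp)
      rcases eq_or_lt_of_le (show j + 1 ≤ m by omega) with rfl | hml2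
      · rintro ⟨-, c2⟩
        rw [show j + 1 + 1 = j + 2 by ring] at c2
        rw [(hpark t (by omega)).2] at c2
        exact absurd c2 (by simp)
      · exact hT2 t ht m (by omega) (by push_cast at hm2 ⊢; omega)

include hrel in
lemma traj_left : ∀ (k : ℕ) (j T0 : ℤ), (∀ t, T0 ≤ t → ξ t j = false) →
    ∃ T, T0 ≤ T ∧ ∀ t, T ≤ t → ∀ m, j - k ≤ m → m < j →
      ¬(ξ t m = true ∧ ξ t (m+1) = true) := by
  intro k
  induction k using Nat.strong_induction_on with
  | _ k IH =>
  intro j T0 hfz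
  rcases Nat.eq_zero_or_pos k with hk | hk
  · exact ⟨T0, le_rfl, fun t ht m hm1 hm2 => absurd hm2 (by subst hk; push_cast at hm1 ⊢; omega)⟩
  by_cases hc : ∀ t, T0 ≤ t → ξ t (j-1) = false
  · obtain ⟨T, hT, hT2⟩ := IH (k-1) (by omega) (j-1) T0 hc
    refine ⟨T, hT, fun t ht m hm1 hm2 => ?_⟩
    rcases eq_or_lt_of_le (show m ≤ j - 1 by omega) with heq | hml
    · rintro ⟨-, c2⟩
      rw [show m + 1 = j by omega] at c2
      rw [hfz t (le_trans hT ht)] at c2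
      exact absurd c2 (by simp)
    · exact hT2 t ht m (by push_cast at hm1 ⊢; omega) (by omega)
  · push_neg at hc
    obtain ⟨t1, ht1T, ht1⟩ := hc
    have htt : ξ t1 (j-1) = true := bool_tt ht1
    have hfz1 : ∀ t, t1 ≤ t → ξ t j = false := fun t ht => hfz t (by omega)
    have hpark := traj_park_left hrel hfz1 htt
    rcases Nat.lt_or_ge k 2 with hk2 | hk2
    · -- k = 1
      refine ⟨T0, le_rfl, fun t ht m hm1 hm2 => ?_⟩
      have hmj : m = j - 1 := by push_cast at hm1; omega
      subst hmj
      rintro ⟨-, c2⟩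
      rw [show j - 1 + 1 = j by ring] at c2
      rw [hfz t ht] at c2
      exact absurd c2 (by simp)
    · have hfz2 : ∀ t, t1 ≤ t → ξ t (j-2) = false := fun t ht => (hpark t ht).2
      obtain ⟨T, hTt1, hT2⟩ := IH (k-2) (by omega) (j-2) t1 hfz2
      refine ⟨T, by omega, fun t ht m hm1 hm2 => ?_⟩
      rcases eq_or_lt_of_le (show m ≤ j - 1 by omega) with heq | hml
      · rintro ⟨-, c2⟩
        rw [show m + 1 = j by omega] at c2
        rw [hfz t (by omega)] at c2
        exact absurd c2 (by simp)
      rcases eq_or_lt_of_le (show m ≤ j - 2 by omega) with heq2 | hml2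
      · rintro ⟨c1, -⟩
        rw [heq2, (hpark t (by omega)).2] at c1
        exact absurd c1 (by simp)
      · exact hT2 t ht m (by push_cast at hm1 ⊢; omega) (by omega)

end Traj
/-! Part 8 : the frozen-empty-site lemma -/

lemma mset_path_eval (t i : ℤ) (b : Bool) : MeasurableSet {ξ : ℤ → X | ξ t i = b} :=
  show MeasurableSet ((fun ξ : ℤ → X => ξ t i) ⁻¹' {b}) from
    ((measurable_pi_apply i).comp (measurable_pi_apply t)) (measurableSet_singleton b)

lemma mset_eval1 (i : ℤ) (b : Bool) : MeasurableSet {η : X | η i = b} :=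
  show MeasurableSet ((fun η : X => η i) ⁻¹' {b}) from
    (measurable_pi_apply i) (measurableSet_singleton b)

lemma mset_frozenF : MeasurableSet frozenF := by
  have : frozenF = ⋂ i : ℤ, ({η : X | η i = false} ∪ {η : X | η (i+1) = false}) := by
    ext η; simp [frozenF]
  rw [this]
  exact MeasurableSet.iInter fun i => (mset_eval1 i false).union (mset_eval1 (i+1) false)

def E0set (i0 : ℤ) : Set (ℤ → X) := {ξ | ∀ t : ℤ, ξ t i0 = false}

def DkAt (i0 : ℤ) (k : ℕ) (t : ℤ) : Set (ℤ → X) :=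
  {ξ | ∀ m : ℤ, i0 - k ≤ m → m < i0 + k → ¬(ξ t m = true ∧ ξ t (m+1) = true)}

def Gset : Set (ℤ → X) := {ξ | ∀ t : ℤ, Rel (ξ t) (ξ (t+1))}

lemma mset_E0 (i0 : ℤ) : MeasurableSet (E0set i0) := by
  have : E0set i0 = ⋂ t : ℤ, {ξ : ℤ → X | ξ t i0 = false} := by ext ξ; simp [E0set]
  rw [this]
  exact MeasurableSet.iInter fun t => mset_path_eval t i0 false

lemma mset_DkAt (i0 : ℤ) (k : ℕ) (t : ℤ) : MeasurableSet (DkAt i0 k t) := by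
  have : DkAt i0 k t = ⋂ m : ℤ, ⋂ (_ : i0 - k ≤ m), ⋂ (_ : m < i0 + k),
      ({ξ : ℤ → X | ξ t m = true} ∩ {ξ : ℤ → X | ξ t (m+1) = true})ᶜ := by
    ext ξ; simp [DkAt]
  rw [this]
  exact MeasurableSet.iInter fun m => MeasurableSet.iInter fun _ =>
    MeasurableSet.iInter fun _ =>
      ((mset_path_eval t m true).inter (mset_path_eval t (m+1) true)).compl

section LemA
variable {μ : Measure X} {P : Measure (ℤ → X)}

lemma P_time0 (hP : IsPathMeasure μ P) {A : Set X} (hA : MeasurableSet A) :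
    P {ξ : ℤ → X | ξ 0 ∈ A} = μ A := by
  have hS : MeasurableSet {p : Fin 1 → X | p 0 ∈ A} :=
    show MeasurableSet ((fun p : Fin 1 → X => p 0) ⁻¹' A) from (measurable_pi_apply 0) hA
  have h1 : {ξ : ℤ → X | ξ 0 ∈ A} = Wmap 0 0 ⁻¹' {p : Fin 1 → X | p 0 ∈ A} := by
    ext ξ
    simp [Wmap]
  rw [h1, marg hP 0 0 hS, chain_zero_apply μ hS]
  rfl

lemma P_Gc_null (hP : IsPathMeasure μ P) : P (Gset)ᶜ = 0 := by
  have : (Gset)ᶜ = {ξ : ℤ → X | ∃ t : ℤ, ¬ Rel (ξ t) (ξ (t+1))} := by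
    ext ξ; simp [Gset]
  rw [this]
  exact rel_as hP

lemma lemA (hP : IsPathMeasure μ P) (hF : μ frozenF = 0) (i0 : ℤ) :
    P (E0set i0) = 0 := by
  have hPp : IsProbabilityMeasure P := hP.1
  have key : ∀ k : ℕ, P (E0set i0) ≤ P (E0set i0 ∩ DkAt i0 k 0) := by
    intro k
    set s : ℤ → Set (ℤ → X) :=
      fun T => E0set i0 ∩ ⋂ t : ℤ, ⋂ (_ : T ≤ t), DkAt i0 k t with hs
    have hsub : E0set i0 ∩ Gset ⊆ ⋃ T : ℤ, s T := by
      rintro ξ ⟨hE, hG⟩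
      obtain ⟨T1, -, hT1b⟩ := traj_right hG k i0 0 (fun t _ => hE t)
      obtain ⟨T2, -, hT2b⟩ := traj_left hG k i0 0 (fun t _ => hE t)
      refine Set.mem_iUnion.mpr ⟨max T1 T2, hE, ?_⟩
      refine Set.mem_iInter.mpr fun t => Set.mem_iInter.mpr fun ht => ?_
      intro m hm1 hm2
      rcases le_or_gt i0 m with hm | hm
      · exact hT1b t (le_trans (le_max_left _ _) ht) m hm hm2
      · exact hT2b t (le_trans (le_max_right _ _) ht) m hm1 hm
    have hmono : Monotone s := by
      intro T T' hTT ξ hξ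
      refine ⟨hξ.1, Set.mem_iInter.mpr fun t => Set.mem_iInter.mpr fun ht => ?_⟩
      exact Set.mem_iInter.mp (Set.mem_iInter.mp hξ.2 t) (le_trans hTT ht)
    have hshift : ∀ T : ℤ, s T ⊆ shPath T ⁻¹' (E0set i0 ∩ DkAt i0 k 0) := by
      intro T ξ hξ
      constructor
      · intro t
        exact hξ.1 (t + T)
      · intro m hm1 hm2
        have := Set.mem_iInter.mp (Set.mem_iInter.mp hξ.2 T) le_rfl
        have h0T : (0 : ℤ) + T = T := by ring
        intro hc
        exact this m hm1 hm2 (by rwa [shPath, h0T] at hc)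
    calc P (E0set i0) ≤ P (E0set i0 ∩ Gset) + P (Gset)ᶜ := by
          refine le_trans (measure_mono ?_) (measure_union_le _ _)
          intro ξ hξ
          by_cases h : ξ ∈ Gset
          · exact Or.inl ⟨hξ, h⟩
          · exact Or.inr h
    _ = P (E0set i0 ∩ Gset) := by rw [P_Gc_null hP, add_zero]
    _ ≤ P (⋃ T : ℤ, s T) := measure_mono hsub
    _ = ⨆ T : ℤ, P (s T) := Directed.measure_iUnion hmono.directed_le
    _ ≤ P (E0set i0 ∩ DkAt i0 k 0) := by
          refine iSup_le fun T => ?_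
          refine le_trans (measure_mono (hshift T)) (le_of_eq ?_)
          exact P_shift_apply hP T ((mset_E0 i0).inter (mset_DkAt i0 k 0))
  have hdec : ∀ j k : ℕ, j ≤ k → E0set i0 ∩ DkAt i0 k 0 ⊆ E0set i0 ∩ DkAt i0 j 0 := by
    intro j k hjk ξ hξ
    exact ⟨hξ.1, fun m hm1 hm2 => hξ.2 m (by push_cast at hm1 ⊢; omega) (by push_cast at hm2 ⊢; omega)⟩
  have hiInf : P (⋂ k : ℕ, (E0set i0 ∩ DkAt i0 k 0)) = ⨅ k : ℕ, P (E0set i0 ∩ DkAt i0 k 0) := by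
    apply Directed.measure_iInter
    · exact fun k => ((mset_E0 i0).inter (mset_DkAt i0 k 0)).nullMeasurableSet
    · intro a b
      exact ⟨max a b, hdec a (max a b) (le_max_left _ _), hdec b (max a b) (le_max_right _ _)⟩
    · exact ⟨0, measure_ne_top P _⟩
  have hfin : (⋂ k : ℕ, (E0set i0 ∩ DkAt i0 k 0)) ⊆ {ξ : ℤ → X | ξ 0 ∈ frozenF} := by
    intro ξ hξ
    intro i
    set k : ℕ := (i - i0).natAbs + 1 with hk
    have hm1 : i0 - (k:ℤ) ≤ i := by omega
    have hm2 : i < i0 + (k:ℤ) := by omega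
    have := (Set.mem_iInter.mp hξ k).2 i hm1 hm2
    cases hi : ξ 0 i <;> cases hi1 : ξ 0 (i+1) <;> simp_all
  have : P (E0set i0) ≤ μ frozenF := by
    calc P (E0set i0) ≤ ⨅ k : ℕ, P (E0set i0 ∩ DkAt i0 k 0) := le_iInf key
    _ = P (⋂ k : ℕ, (E0set i0 ∩ DkAt i0 k 0)) := hiInf.symm
    _ ≤ P {ξ : ℤ → X | ξ 0 ∈ frozenF} := measure_mono hfin
    _ = μ frozenF := P_time0 hP mset_frozenF
  rw [hF] at this
  exact le_antisymm this zero_le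

end LemA
/-! Part 9 : the ladder -/

section Ladder

/-- number of "hole" times among the first `n` steps of a window -/
def cntW (n : ℕ) (h : ℤ) (p : Fin (n+1) → X) : ℕ :=
  ∑ s : Fin (n+1), (if s.val < n ∧ p s h = false then 1 else 0)

/-- the exponential weight -/
def wgtW (B : Set X) (h : ℤ) (r : ℝ≥0∞) (n : ℕ) : (Fin (n+1) → X) → ℝ≥0∞ :=
  Set.indicator {p | ∀ s, p s ∈ B} (fun p => r ^ cntW n h p)

lemma measurable_cntW (n : ℕ) (h : ℤ) : Measurable (cntW n h) := by
  apply Finset.measurable_sum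
  intro s _
  by_cases hs : s.val < n
  · have : (fun p : Fin (n+1) → X => if s.val < n ∧ p s h = false then 1 else 0)
        = Set.indicator {p : Fin (n+1) → X | p s h = false} (fun _ => 1) := by
      funext p
      by_cases hc : p s h = false <;> simp [hc, hs, Set.indicator_apply]
    rw [this]
    exact measurable_const.indicator (mset_eval2 s h false)
  · have : (fun p : Fin (n+1) → X => if s.val < n ∧ p s h = false then 1 else 0)
        = fun _ => 0 := by
      funext p; simp [hs]
    rw [this]
    exact measurable_const

lemma mset_allB {B : Set X} (hB : MeasurableSet B) (n : ℕ) :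
    MeasurableSet {p : Fin (n+1) → X | ∀ s, p s ∈ B} := by
  have : {p : Fin (n+1) → X | ∀ s, p s ∈ B} = ⋂ s, (fun p : Fin (n+1) → X => p s) ⁻¹' B := by
    ext p; simp
  rw [this]
  exact MeasurableSet.iInter fun s => (measurable_pi_apply s) hB

lemma measurable_wgtW {B : Set X} (hB : MeasurableSet B) (h : ℤ) (r : ℝ≥0∞) (n : ℕ) :
    Measurable (wgtW B h r n) := by
  apply Measurable.indicator _ (mset_allB hB n)
  exact measurable_from_nat.comp (measurable_cntW n h)

lemma one_le_rpow {r : ℝ≥0∞} (hr : 1 ≤ r) (n : ℕ) : 1 ≤ r ^ n := by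
  induction n with
  | zero => simp
  | succ n ih =>
    rw [pow_succ]
    calc (1:ℝ≥0∞) = 1 * 1 := (mul_one 1).symm
    _ ≤ r ^ n * r := mul_le_mul' ih hr

lemma rpow_mono {r : ℝ≥0∞} (hr : 1 ≤ r) {m n : ℕ} (hmn : m ≤ n) : r ^ m ≤ r ^ n := by
  calc r ^ m = r ^ m * 1 := (mul_one _).symm
  _ ≤ r ^ m * r ^ (n - m) := mul_le_mul' le_rfl (one_le_rpow hr _)
  _ = r ^ (m + (n - m)) := (pow_add r m (n-m)).symm
  _ = r ^ n := by congr 1; omega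

variable {B : Set X} {h : ℤ} {v : Bool}

/-- the one-step coin bound -/
lemma coin_step_bound (hB : MeasurableSet B)
    (hstep : ∀ η α, η ∈ B → η h = false → fstep η α ∈ B → α h = v)
    {η : X} (hη : η ∈ B) (hhole : η h = false) :
    coin (fstep η ⁻¹' B) ≤ 1 - eps h := by
  refine le_trans (measure_mono ?_) (coin_coord_le h v)
  intro α hα
  exact hstep η α hη hhole hα

lemma cntW_snoc (n : ℕ) (p : Fin (n+1) → X) (η' : X) :
    cntW (n+1) h (Fin.snoc p η')
      = cntW n h p + (if p (Fin.last n) h = false then 1 else 0) := by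
  rw [cntW, Fin.sum_univ_castSucc]
  have hlast : (if (Fin.last (n+1)).val < n+1 ∧ (Fin.snoc p η' : Fin (n+2) → X) (Fin.last (n+1)) h = false then 1 else 0) = 0 := by
    simp [Fin.last]
  rw [hlast, add_zero]
  have hterm : ∀ j : Fin (n+1),
      (if (Fin.castSucc j).val < n+1 ∧ (Fin.snoc p η' : Fin (n+2) → X) (Fin.castSucc j) h = false then 1 else 0)
        = (if p j h = false then 1 else 0) := by
    intro j
    rw [Fin.snoc_castSucc]
    have hv : (Fin.castSucc j).val < n + 1 := by rw [Fin.coe_castSucc]; exact j.isLt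
    simp [hv, Nat.le_of_lt_succ j.isLt]
  rw [Finset.sum_congr rfl (fun j _ => hterm j)]
  -- now ∑ j, [p j h = ff] = cntW n h p + [p last h = ff]
  have hlast2 : (if (Fin.last n).val < n ∧ p (Fin.last n) h = false then 1 else 0) = 0 := by
    simp [Fin.last]
  have hc2 : cntW n h p = ∑ i : Fin n, (if p (Fin.castSucc i) h = false then 1 else 0) := by
    rw [cntW, Fin.sum_univ_castSucc, hlast2, add_zero]
    refine Finset.sum_congr rfl fun i _ => ?_
    have hv : (Fin.castSucc i).val < n := by rw [Fin.coe_castSucc]; exact i.isLt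
    simp [hv]
  rw [Fin.sum_univ_castSucc (f := fun j : Fin (n+1) => if p j h = false then 1 else 0), hc2]

lemma snoc_allB (n : ℕ) (p : Fin (n+1) → X) (η' : X) :
    (∀ s : Fin (n+2), (Fin.snoc p η' : Fin (n+2) → X) s ∈ B)
      ↔ (∀ s : Fin (n+1), p s ∈ B) ∧ η' ∈ B := by
  constructor
  · intro hall
    constructor
    · intro s
      have := hall (Fin.castSucc s)
      rwa [Fin.snoc_castSucc] at this
    · have := hall (Fin.last (n+1))
      rwa [Fin.snoc_last] at this
  · rintro ⟨h1, h2⟩ s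
    induction s using Fin.lastCases with
    | last => rwa [Fin.snoc_last]
    | cast j => rw [Fin.snoc_castSucc]; exact h1 j

lemma wgt_induction (μ : Measure X) (hμ : IsProbabilityMeasure μ) (hB : MeasurableSet B)
    (hstep : ∀ η α, η ∈ B → η h = false → fstep η α ∈ B → α h = v) (n : ℕ) :
    ∫⁻ p, wgtW B h (1 - eps h)⁻¹ n p ∂ chain μ n ≤ 1 := by
  set c : ℝ≥0∞ := 1 - eps h with hc
  have hc0 : c ≠ 0 := (one_sub_eps_pos h).ne'
  have hctop : c ≠ ⊤ := by
    refine ne_top_of_le_ne_top ENNReal.one_ne_top ?_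
    exact tsub_le_self
  induction n with
  | zero =>
    have hpt : ∀ p : Fin 1 → X, wgtW B h c⁻¹ 0 p ≤ 1 := by
      intro p
      rw [wgtW]
      have hcnt : cntW 0 h p = 0 := by
        rw [cntW]
        refine Finset.sum_eq_zero fun s _ => ?_
        simp
      by_cases hall : p ∈ {p : Fin 1 → X | ∀ s, p s ∈ B}
      · rw [Set.indicator_of_mem hall, hcnt, pow_zero]
      · rw [Set.indicator_of_notMem hall]
        exact zero_le
    calc ∫⁻ p, wgtW B h c⁻¹ 0 p ∂ chain μ 0 ≤ ∫⁻ _, 1 ∂ chain μ 0 := lintegral_mono hpt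
    _ = 1 := by
        rw [lintegral_one]
        have := chain_prob μ hμ 0
        exact measure_univ
  | succ n ih =>
    rw [chain_succ_lintegral μ n (measurable_wgtW hB h c⁻¹ (n+1))]
    refine le_trans (lintegral_mono ?_) ih
    intro p
    -- pointwise : inner integral over α is at most wgtW … n p
    by_cases hall : ∀ s : Fin (n+1), p s ∈ B
    · have heq : ∀ α, wgtW B h c⁻¹ (n+1) (Fin.snoc p (fstep (p (Fin.last n)) α))
          = Set.indicator (fstep (p (Fin.last n)) ⁻¹' B)
              (fun _ => c⁻¹ ^ (cntW n h p + (if p (Fin.last n) h = false then 1 else 0))) α := by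
        intro α
        by_cases hmem : fstep (p (Fin.last n)) α ∈ B
        · rw [wgtW, Set.indicator_of_mem
              (show (Fin.snoc p (fstep (p (Fin.last n)) α) : Fin (n+1+1) → X)
                  ∈ {q : Fin (n+1+1) → X | ∀ s, q s ∈ B} from (snoc_allB n p _).mpr ⟨hall, hmem⟩),
            Set.indicator_of_mem
              (show α ∈ fstep (p (Fin.last n)) ⁻¹' B from hmem), cntW_snoc]
        · rw [wgtW, Set.indicator_of_notMem
              (show (Fin.snoc p (fstep (p (Fin.last n)) α) : Fin (n+1+1) → X)
                  ∉ {q : Fin (n+1+1) → X | ∀ s, q s ∈ B} from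
                fun hc' => hmem ((snoc_allB n p _).mp hc').2),
            Set.indicator_of_notMem
              (show α ∉ fstep (p (Fin.last n)) ⁻¹' B from hmem)]
      simp_rw [heq]
      rw [lintegral_indicator_const ((measurable_fstep _) hB)]
      rw [wgtW, Set.indicator_of_mem
        (show p ∈ {q : Fin (n+1) → X | ∀ s, q s ∈ B} from hall)]
      by_cases hhole : p (Fin.last n) h = false
      · rw [if_pos hhole, pow_add, pow_one]
        calc c⁻¹ ^ cntW n h p * c⁻¹ * coin (fstep (p (Fin.last n)) ⁻¹' B)
            ≤ c⁻¹ ^ cntW n h p * c⁻¹ * c :=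
              mul_le_mul' le_rfl (coin_step_bound hB hstep (hall _) hhole)
        _ = c⁻¹ ^ cntW n h p * (c⁻¹ * c) := by ring
        _ = c⁻¹ ^ cntW n h p := by rw [ENNReal.inv_mul_cancel hc0 hctop, mul_one]
      · rw [if_neg hhole, add_zero]
        calc c⁻¹ ^ cntW n h p * coin (fstep (p (Fin.last n)) ⁻¹' B)
            ≤ c⁻¹ ^ cntW n h p * 1 :=
              mul_le_mul' le_rfl prob_le_one
        _ = c⁻¹ ^ cntW n h p := mul_one _
    · have heq : ∀ α, wgtW B h c⁻¹ (n+1) (Fin.snoc p (fstep (p (Fin.last n)) α)) = 0 := by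
        intro α
        rw [wgtW, Set.indicator_of_notMem
          (show (Fin.snoc p (fstep (p (Fin.last n)) α) : Fin (n+2) → X)
              ∉ {q : Fin (n+2) → X | ∀ s, q s ∈ B} from
            fun hc' => hall ((snoc_allB n p _).mp hc').1)]
      simp_rw [heq]
      rw [lintegral_zero, wgtW, Set.indicator_of_notMem
        (show p ∉ {q : Fin (n+1) → X | ∀ s, q s ∈ B} from hall)]

lemma chain_count_bound (μ : Measure X) (hμ : IsProbabilityMeasure μ) (hB : MeasurableSet B)
    (hstep : ∀ η α, η ∈ B → η h = false → fstep η α ∈ B → α h = v) (n m : ℕ) :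
    chain μ n {p | (∀ s, p s ∈ B) ∧ m ≤ cntW n h p} ≤ (1 - eps h) ^ m := by
  set c : ℝ≥0∞ := 1 - eps h with hc
  have hc0 : c ≠ 0 := (one_sub_eps_pos h).ne'
  have hctop : c ≠ ⊤ := ne_top_of_le_ne_top ENNReal.one_ne_top tsub_le_self
  have hr1 : (1:ℝ≥0∞) ≤ c⁻¹ := ENNReal.one_le_inv.mpr (one_sub_eps_lt_one h).le
  have hSmeas : MeasurableSet {p : Fin (n+1) → X | (∀ s, p s ∈ B) ∧ m ≤ cntW n h p} := by
    refine (mset_allB hB n).inter ?_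
    exact (measurable_cntW n h) (measurableSet_le measurable_const measurable_id)
  have hpoint : ∀ p : Fin (n+1) → X,
      Set.indicator {p : Fin (n+1) → X | (∀ s, p s ∈ B) ∧ m ≤ cntW n h p} (fun _ => 1) p
        ≤ c ^ m * wgtW B h c⁻¹ n p := by
    intro p
    by_cases hp : p ∈ {p : Fin (n+1) → X | (∀ s, p s ∈ B) ∧ m ≤ cntW n h p}
    · rw [Set.indicator_of_mem hp]
      rw [wgtW, Set.indicator_of_mem (show p ∈ {q : Fin (n+1) → X | ∀ s, q s ∈ B} from hp.1)]
      calc (1:ℝ≥0∞) = (c * c⁻¹) ^ m := by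
            rw [ENNReal.mul_inv_cancel hc0 hctop, one_pow]
      _ = c ^ m * (c⁻¹) ^ m := mul_pow c c⁻¹ m
      _ ≤ c ^ m * (c⁻¹) ^ cntW n h p := mul_le_mul' le_rfl (rpow_mono hr1 hp.2)
    · rw [Set.indicator_of_notMem hp]
      exact zero_le
  calc chain μ n {p | (∀ s, p s ∈ B) ∧ m ≤ cntW n h p}
      = ∫⁻ p, Set.indicator {p : Fin (n+1) → X | (∀ s, p s ∈ B) ∧ m ≤ cntW n h p}
          (fun _ => 1) p ∂ chain μ n := by
        rw [lintegral_indicator_const hSmeas, one_mul]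
  _ ≤ ∫⁻ p, c ^ m * wgtW B h c⁻¹ n p ∂ chain μ n := lintegral_mono hpoint
  _ = c ^ m * ∫⁻ p, wgtW B h c⁻¹ n p ∂ chain μ n := lintegral_const_mul _ (measurable_wgtW hB h _ n)
  _ ≤ c ^ m * 1 := mul_le_mul' le_rfl (wgt_induction μ hμ hB hstep n)
  _ = c ^ m := mul_one _

end Ladder
/-! Part 9b : path-level ladder -/

def pcnt (h T : ℤ) (ξ : ℤ → X) (n : ℕ) : ℕ :=
  ∑ s ∈ Finset.range n, (if ξ (T + (s:ℤ)) h = false then 1 else 0)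

lemma pcnt_mono (h T : ℤ) (ξ : ℤ → X) {a b : ℕ} (hab : a ≤ b) :
    pcnt h T ξ a ≤ pcnt h T ξ b :=
  Finset.sum_le_sum_of_subset (Finset.range_subset_range.mpr hab)

lemma pcnt_extract (h T : ℤ) (ξ : ℤ → X)
    (hio : ∀ T', ∃ t, T' ≤ t ∧ ξ t h = false) :
    ∀ m : ℕ, ∃ n : ℕ, m ≤ pcnt h T ξ n := by
  intro m
  induction m with
  | zero => exact ⟨0, Nat.zero_le _⟩
  | succ m ih =>
    obtain ⟨n, hn⟩ := ih
    obtain ⟨t, ht1, ht2⟩ := hio (T + n)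
    set s0 : ℕ := (t - T).toNat with hs0
    have hs0' : (s0 : ℤ) = t - T := by omega
    have hns0 : n ≤ s0 := by omega
    have hsplit : pcnt h T ξ n + ∑ s ∈ Finset.Ico n (s0+1),
        (if ξ (T + (s:ℤ)) h = false then 1 else 0) = pcnt h T ξ (s0+1) := by
      simp only [pcnt, Finset.range_eq_Ico]
      exact Finset.sum_Ico_consecutive _ (Nat.zero_le n) (by omega)
    have hterm : 1 ≤ ∑ s ∈ Finset.Ico n (s0+1), (if ξ (T + (s:ℤ)) h = false then 1 else 0) := by
      have hmem : s0 ∈ Finset.Ico n (s0+1) := by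
        rw [Finset.mem_Ico]; omega
      have hval : (if ξ (T + (s0:ℤ)) h = false then 1 else 0) = 1 := by
        rw [if_pos]
        rw [show T + (s0:ℤ) = t by omega]
        exact ht2
      calc 1 = (if ξ (T + (s0:ℤ)) h = false then 1 else 0) := hval.symm
      _ ≤ ∑ s ∈ Finset.Ico n (s0+1), (if ξ (T + (s:ℤ)) h = false then 1 else 0) :=
        Finset.single_le_sum (f := fun s : ℕ => if ξ (T + (s:ℤ)) h = false then 1 else 0)
          (fun i _ => Nat.zero_le _) hmem
    exact ⟨s0 + 1, by omega⟩

lemma pcnt_eq_cntW (h T : ℤ) (ξ : ℤ → X) (n : ℕ) :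
    cntW n h (Wmap T n ξ) = pcnt h T ξ n := by
  have h1 : cntW n h (Wmap T n ξ)
      = ∑ i ∈ Finset.range (n+1), (if i < n ∧ ξ (T + (i:ℤ)) h = false then 1 else 0) := by
    rw [cntW]
    exact Fin.sum_univ_eq_sum_range
      (fun i : ℕ => if i < n ∧ ξ (T + (i:ℤ)) h = false then 1 else 0) (n+1)
  rw [h1, Finset.sum_range_succ]
  have hlast : (if n < n ∧ ξ (T + (n:ℤ)) h = false then 1 else 0) = 0 := by simp
  rw [hlast, add_zero, pcnt]
  refine Finset.sum_congr rfl fun i hi => ?_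
  have : i < n := Finset.mem_range.mp hi
  simp [this]

section LadderPath
variable {μ : Measure X} {P : Measure (ℤ → X)} {B : Set X} {h : ℤ} {v : Bool}

lemma ladder_path (hP : IsPathMeasure μ P) (hμ : IsProbabilityMeasure μ)
    (hB : MeasurableSet B)
    (hstep : ∀ η α, η ∈ B → η h = false → fstep η α ∈ B → α h = v) (T : ℤ) :
    P ({ξ : ℤ → X | ∀ t, T ≤ t → ξ t ∈ B}
        ∩ {ξ : ℤ → X | ∀ T', ∃ t, T' ≤ t ∧ ξ t h = false}) = 0 := by
  set c : ℝ≥0∞ := 1 - eps h with hc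
  have hSmeas : ∀ n m : ℕ,
      MeasurableSet {p : Fin (n+1) → X | (∀ s, p s ∈ B) ∧ m ≤ cntW n h p} := by
    intro n m
    refine (mset_allB hB n).inter ?_
    exact (measurable_cntW n h) (measurableSet_le measurable_const measurable_id)
  have hkey : ∀ m : ℕ,
      P ({ξ : ℤ → X | ∀ t, T ≤ t → ξ t ∈ B}
        ∩ {ξ : ℤ → X | ∀ T', ∃ t, T' ≤ t ∧ ξ t h = false}) ≤ c ^ m := by
    intro m
    have hsub : {ξ : ℤ → X | ∀ t, T ≤ t → ξ t ∈ B}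
        ∩ {ξ : ℤ → X | ∀ T', ∃ t, T' ≤ t ∧ ξ t h = false}
        ⊆ ⋃ n : ℕ, ({ξ : ℤ → X | ∀ t, T ≤ t → ξ t ∈ B} ∩ {ξ | m ≤ pcnt h T ξ n}) := by
      rintro ξ ⟨h1, h2⟩
      obtain ⟨n, hn⟩ := pcnt_extract h T ξ h2 m
      exact Set.mem_iUnion.mpr ⟨n, h1, hn⟩
    have hmono : Monotone (fun n : ℕ =>
        {ξ : ℤ → X | ∀ t, T ≤ t → ξ t ∈ B} ∩ {ξ | m ≤ pcnt h T ξ n}) := by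
      intro a b hab ξ hξ
      exact ⟨hξ.1, le_trans hξ.2 (pcnt_mono h T ξ hab)⟩
    calc P _ ≤ P (⋃ n : ℕ, ({ξ : ℤ → X | ∀ t, T ≤ t → ξ t ∈ B} ∩ {ξ | m ≤ pcnt h T ξ n})) :=
          measure_mono hsub
    _ = ⨆ n : ℕ, P ({ξ : ℤ → X | ∀ t, T ≤ t → ξ t ∈ B} ∩ {ξ | m ≤ pcnt h T ξ n}) :=
          Directed.measure_iUnion hmono.directed_le
    _ ≤ c ^ m := by
          refine iSup_le fun n => ?_
          have hsub2 : {ξ : ℤ → X | ∀ t, T ≤ t → ξ t ∈ B} ∩ {ξ | m ≤ pcnt h T ξ n}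
              ⊆ Wmap T n ⁻¹' {p | (∀ s, p s ∈ B) ∧ m ≤ cntW n h p} := by
            rintro ξ ⟨h1, h2⟩
            refine ⟨fun s => h1 (T + ((s:ℕ):ℤ)) (by omega), ?_⟩
            rw [pcnt_eq_cntW]
            exact h2
          refine le_trans (measure_mono hsub2) ?_
          rw [marg hP T n (hSmeas n m)]
          exact chain_count_bound μ hμ hB hstep n m
  have htend := ENNReal.tendsto_pow_atTop_nhds_zero_of_lt_one (show c < 1 from one_sub_eps_lt_one h)
  exact le_antisymm (ge_of_tendsto' htend hkey) zero_le

end LadderPath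

/-! Part 9c : the 11-pair lemma -/

def blockSet (i0 : ℤ) (k : ℕ) : Set X :=
  {η | ∀ m : ℤ, i0 - k ≤ m → m ≤ i0 + 1 + k → η m = true}

def FromBset (i0 : ℤ) (k : ℕ) (T : ℤ) : Set (ℤ → X) :=
  {ξ | ∀ t, T ≤ t → ξ t ∈ blockSet i0 k}

def EvBset (i0 : ℤ) (k : ℕ) : Set (ℤ → X) := ⋃ T : ℤ, FromBset i0 k T

def E11set (i0 : ℤ) : Set (ℤ → X) := {ξ | ∀ t : ℤ, ξ t i0 = true ∧ ξ t (i0+1) = true}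

lemma mset_blockSet (i0 : ℤ) (k : ℕ) : MeasurableSet (blockSet i0 k) := by
  have : blockSet i0 k = ⋂ m : ℤ, ⋂ (_ : i0 - k ≤ m), ⋂ (_ : m ≤ i0 + 1 + k),
      {η : X | η m = true} := by
    ext η; simp [blockSet]
  rw [this]
  exact MeasurableSet.iInter fun m => MeasurableSet.iInter fun _ =>
    MeasurableSet.iInter fun _ => mset_eval1 m true

lemma mset_FromB (i0 : ℤ) (k : ℕ) (T : ℤ) : MeasurableSet (FromBset i0 k T) := by
  have : FromBset i0 k T = ⋂ t : ℤ, ⋂ (_ : T ≤ t),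
      (fun ξ : ℤ → X => ξ t) ⁻¹' blockSet i0 k := by
    ext ξ; simp [FromBset]
  rw [this]
  exact MeasurableSet.iInter fun t => MeasurableSet.iInter fun _ =>
    (measurable_pi_apply t) (mset_blockSet i0 k)

lemma mset_E11 (i0 : ℤ) : MeasurableSet (E11set i0) := by
  have : E11set i0 = ⋂ t : ℤ,
      ({ξ : ℤ → X | ξ t i0 = true} ∩ {ξ : ℤ → X | ξ t (i0+1) = true}) := by
    ext ξ; simp [E11set]
  rw [this]
  exact MeasurableSet.iInter fun t =>
    (mset_path_eval t i0 true).inter (mset_path_eval t (i0+1) true)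

lemma hstepL (i0 : ℤ) (k : ℕ) : ∀ η α, η ∈ blockSet i0 k →
    η (i0 - k - 1) = false → fstep η α ∈ blockSet i0 k → α (i0 - k - 1) = true := by
  intro η α hη hhole hnext
  have h1 : η (i0 - k) = true := hη _ le_rfl (by omega)
  have h2 : η (i0 - k + 1) = true := hη _ (by omega) (by omega)
  have h3 : fstep η α (i0 - k) = true := hnext _ le_rfl (by omega)
  exact step_blockL η α (i0 - (k:ℤ)) h1 h2 hhole h3

lemma hstepR (i0 : ℤ) (k : ℕ) : ∀ η α, η ∈ blockSet i0 k →
    η (i0 + 1 + k + 1) = false → fstep η α ∈ blockSet i0 k → α (i0 + 1 + k + 1) = false := by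
  intro η α hη hhole hnext
  have h1 : η (i0 + 1 + k) = true := hη _ (by omega) le_rfl
  have h2 : η (i0 + 1 + k - 1) = true := hη _ (by omega) (by omega)
  have h3 : fstep η α (i0 + 1 + k) = true := hnext _ (by omega) le_rfl
  exact step_blockR η α (i0 + 1 + (k:ℤ)) h1 h2 hhole h3

section LemB
variable {μ : Measure X} {P : Measure (ℤ → X)}

lemma FromB_null (hP : IsPathMeasure μ P) (hμ : IsProbabilityMeasure μ)
    (i0 : ℤ) (k : ℕ) (T : ℤ) :
    P (FromBset i0 k T \ EvBset i0 (k+1)) = 0 := by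
  have hsub : FromBset i0 k T \ EvBset i0 (k+1) ⊆
      (FromBset i0 k T ∩ {ξ | ∀ T', ∃ t, T' ≤ t ∧ ξ t (i0 - k - 1) = false}) ∪
      (FromBset i0 k T ∩ {ξ | ∀ T', ∃ t, T' ≤ t ∧ ξ t (i0 + 1 + k + 1) = false}) := by
    rintro ξ ⟨hF, hnE⟩
    by_cases hioL : ∀ T', ∃ t, T' ≤ t ∧ ξ t (i0 - k - 1) = false
    · exact Or.inl ⟨hF, hioL⟩
    by_cases hioR : ∀ T', ∃ t, T' ≤ t ∧ ξ t (i0 + 1 + k + 1) = false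
    · exact Or.inr ⟨hF, hioR⟩
    exfalso
    push_neg at hioL hioR
    obtain ⟨T1, hT1⟩ := hioL
    obtain ⟨T2, hT2⟩ := hioR
    apply hnE
    refine Set.mem_iUnion.mpr ⟨max T (max T1 T2), ?_⟩
    intro t ht m hm1 hm2
    push_cast at hm1 hm2
    rcases (show m = i0 - k - 1 ∨ m = i0 + 1 + k + 1 ∨ (i0 - k ≤ m ∧ m ≤ i0 + 1 + k)
        by omega) with hm | hm | hm
    · subst hm
      exact bool_tt (hT1 t (by omega))
    · subst hm
      exact bool_tt (hT2 t (by omega))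
    · exact hF t (by omega) m hm.1 hm.2
  refine measure_mono_null hsub (measure_union_null ?_ ?_)
  · exact ladder_path hP hμ (mset_blockSet i0 k) (hstepL i0 k) T
  · exact ladder_path hP hμ (mset_blockSet i0 k) (hstepR i0 k) T

lemma EvB_null (hP : IsPathMeasure μ P) (hμ : IsProbabilityMeasure μ) (i0 : ℤ) :
    ∀ k : ℕ, P (E11set i0 \ EvBset i0 k) = 0 := by
  intro k
  induction k with
  | zero =>
    refine measure_mono_null ?_ (measure_empty (μ := P))
    rintro ξ ⟨h1, h2⟩
    exfalso
    apply h2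
    refine Set.mem_iUnion.mpr ⟨0, ?_⟩
    intro t _ m hm1 hm2
    push_cast at hm1 hm2
    rcases (show m = i0 ∨ m = i0 + 1 by omega) with rfl | rfl
    · exact (h1 t).1
    · exact (h1 t).2
  | succ k ih =>
    have hsub : E11set i0 \ EvBset i0 (k+1) ⊆
        (E11set i0 \ EvBset i0 k) ∪ ⋃ T : ℤ, (FromBset i0 k T \ EvBset i0 (k+1)) := by
      rintro ξ ⟨h1, h2⟩
      by_cases h3 : ξ ∈ EvBset i0 k
      · obtain ⟨T, hT⟩ := Set.mem_iUnion.mp h3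
        exact Or.inr (Set.mem_iUnion.mpr ⟨T, hT, h2⟩)
      · exact Or.inl ⟨h1, h3⟩
    refine measure_mono_null hsub (measure_union_null ih ?_)
    exact measure_iUnion_null fun T => FromB_null hP hμ i0 k T

lemma lemB (hP : IsPathMeasure μ P) (hμ : IsProbabilityMeasure μ)
    (hreg : μ {η : X | ∀ i : ℤ, η i = true} = 0) (i0 : ℤ) :
    P (E11set i0) = 0 := by
  have hPp : IsProbabilityMeasure P := hP.1
  have hBlk0 : ∀ k : ℕ, MeasurableSet {ξ : ℤ → X | ξ 0 ∈ blockSet i0 k} := by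
    intro k
    exact (measurable_pi_apply 0) (mset_blockSet i0 k)
  have key : ∀ k : ℕ, P (E11set i0) ≤ P (E11set i0 ∩ {ξ | ξ 0 ∈ blockSet i0 k}) := by
    intro k
    have hmono : Monotone (fun T : ℤ => E11set i0 ∩ FromBset i0 k T) := by
      intro T T' hTT ξ hξ
      exact ⟨hξ.1, fun t ht => hξ.2 t (le_trans hTT ht)⟩
    have hshift : ∀ T : ℤ, E11set i0 ∩ FromBset i0 k T ⊆
        shPath T ⁻¹' (E11set i0 ∩ {ξ | ξ 0 ∈ blockSet i0 k}) := by
      intro T ξ hξ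
      constructor
      · intro t
        exact hξ.1 (t + T)
      · show ξ (0 + T) ∈ blockSet i0 k
        rw [show (0:ℤ) + T = T by ring]
        exact hξ.2 T le_rfl
    calc P (E11set i0) ≤ P (E11set i0 ∩ EvBset i0 k) + P (E11set i0 \ EvBset i0 k) := by
          refine le_trans (measure_mono ?_) (measure_union_le _ _)
          intro ξ hξ
          by_cases hE : ξ ∈ EvBset i0 k
          · exact Or.inl ⟨hξ, hE⟩
          · exact Or.inr ⟨hξ, hE⟩
    _ = P (E11set i0 ∩ EvBset i0 k) := by rw [EvB_null hP hμ i0 k, add_zero]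
    _ = P (⋃ T : ℤ, (E11set i0 ∩ FromBset i0 k T)) := by rw [EvBset, Set.inter_iUnion]
    _ = ⨆ T : ℤ, P (E11set i0 ∩ FromBset i0 k T) := Directed.measure_iUnion hmono.directed_le
    _ ≤ P (E11set i0 ∩ {ξ | ξ 0 ∈ blockSet i0 k}) := by
          refine iSup_le fun T => ?_
          refine le_trans (measure_mono (hshift T)) (le_of_eq ?_)
          exact P_shift_apply hP T ((mset_E11 i0).inter (hBlk0 k))
  have hdec : ∀ j k : ℕ, j ≤ k →
      E11set i0 ∩ {ξ : ℤ → X | ξ 0 ∈ blockSet i0 k} ⊆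
        E11set i0 ∩ {ξ : ℤ → X | ξ 0 ∈ blockSet i0 j} := by
    intro j k hjk ξ hξ
    exact ⟨hξ.1, fun m hm1 hm2 => hξ.2 m (by push_cast at hm1 ⊢; omega)
      (by push_cast at hm2 ⊢; omega)⟩
  have hiInf : P (⋂ k : ℕ, (E11set i0 ∩ {ξ : ℤ → X | ξ 0 ∈ blockSet i0 k}))
      = ⨅ k : ℕ, P (E11set i0 ∩ {ξ : ℤ → X | ξ 0 ∈ blockSet i0 k}) := by
    apply Directed.measure_iInter
    · exact fun k => ((mset_E11 i0).inter (hBlk0 k)).nullMeasurableSet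
    · intro a b
      exact ⟨max a b, hdec a (max a b) (le_max_left _ _), hdec b (max a b) (le_max_right _ _)⟩
    · exact ⟨0, measure_ne_top P _⟩
  have hfin : (⋂ k : ℕ, (E11set i0 ∩ {ξ : ℤ → X | ξ 0 ∈ blockSet i0 k}))
      ⊆ {ξ : ℤ → X | ξ 0 ∈ {η : X | ∀ i : ℤ, η i = true}} := by
    intro ξ hξ i
    set k : ℕ := (i - i0).natAbs with hk
    exact (Set.mem_iInter.mp hξ k).2 i (by omega) (by omega)
  have hAones : MeasurableSet {η : X | ∀ i : ℤ, η i = true} := by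
    have : {η : X | ∀ i : ℤ, η i = true} = ⋂ i : ℤ, {η : X | η i = true} := by
      ext η; simp
    rw [this]
    exact MeasurableSet.iInter fun i => mset_eval1 i true
  have : P (E11set i0) ≤ μ {η : X | ∀ i : ℤ, η i = true} := by
    calc P (E11set i0) ≤ ⨅ k : ℕ, P (E11set i0 ∩ {ξ : ℤ → X | ξ 0 ∈ blockSet i0 k}) :=
          le_iInf key
    _ = P (⋂ k : ℕ, (E11set i0 ∩ {ξ : ℤ → X | ξ 0 ∈ blockSet i0 k})) := hiInf.symm
    _ ≤ P {ξ : ℤ → X | ξ 0 ∈ {η : X | ∀ i : ℤ, η i = true}} := measure_mono hfin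
    _ = μ {η : X | ∀ i : ℤ, η i = true} := P_time0 hP hAones
  rw [hreg] at this
  exact le_antisymm this zero_le

end LemB
/-! Part 10 : main theorem -/

/-- For a regular TIS state `μ` with `μ(F) = 0`, the path measure gives
probability zero to the event that the configuration restricted to an interval `I` is
constantly equal to `θ`, provided `|I| ≥ 2`, or `I = {i}` with `θ(i) = 0`. -/
theorem no_frozen_interval
    (μ : Measure X) (hreg : RegF μ) (hμ : TISF μ) (hF : μ frozenF = 0)
    (P : Measure (ℤ → X)) (hP : IsPathMeasure μ P)
    (I : Set ℤ) (hI : I.OrdConnected) (θ : ℤ → Bool)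
    (hcase : (∃ i j, i ∈ I ∧ j ∈ I ∧ i ≠ j) ∨ (∃ i, I = {i} ∧ θ i = false)) :
    P {ξ : ℤ → X | ∀ t : ℤ, ∀ i ∈ I, ξ t i = θ i} = 0 := by
  have hμprob : IsProbabilityMeasure μ := hμ.1.1
  rcases hcase with ⟨i, j, hi, hj, hij⟩ | ⟨i, hIi, hθi⟩
  · -- two distinct points in the interval
    set a : ℤ := min i j with ha
    set b : ℤ := max i j with hb
    have hab : a < b := by
      rcases lt_or_gt_of_ne hij with hlt | hgt
      · rw [ha, hb]; omega
      · rw [ha, hb]; omega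
    have haI : a ∈ I := by
      rcases le_total i j with hle | hle
      · rwa [show a = i by rw [ha]; omega]
      · rwa [show a = j by rw [ha]; omega]
    have hbI : b ∈ I := by
      rcases le_total i j with hle | hle
      · rwa [show b = j by rw [hb]; omega]
      · rwa [show b = i by rw [hb]; omega]
    have hIcc : Set.Icc a b ⊆ I := hI.out haI hbI
    by_cases hex : ∃ m ∈ Set.Icc a b, θ m = false
    · obtain ⟨m, hm, hθm⟩ := hex
      have hsub : {ξ : ℤ → X | ∀ t : ℤ, ∀ i ∈ I, ξ t i = θ i} ⊆ E0set m := by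
        intro ξ hξ t
        rw [hξ t m (hIcc hm), hθm]
      exact measure_mono_null hsub (lemA hP hF m)
    · push_neg at hex
      have hθa : θ a = true := bool_tt (hex a (by rw [Set.mem_Icc]; omega))
      have hθa1 : θ (a+1) = true := bool_tt (hex (a+1) (by rw [Set.mem_Icc]; omega))
      have hsub : {ξ : ℤ → X | ∀ t : ℤ, ∀ i ∈ I, ξ t i = θ i} ⊆ E11set a := by
        intro ξ hξ t
        constructor
        · rw [hξ t a (hIcc (by rw [Set.mem_Icc]; omega)), hθa]
        · rw [hξ t (a+1) (hIcc (by rw [Set.mem_Icc]; omega)), hθa1]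
      exact measure_mono_null hsub (lemB hP hμprob hreg a)
  · -- singleton at an empty site
    have hsub : {ξ : ℤ → X | ∀ t : ℤ, ∀ i ∈ I, ξ t i = θ i} ⊆ E0set i := by
      intro ξ hξ t
      rw [hξ t i (by rw [hIi]; exact Set.mem_singleton i), hθi]
    exact measure_mono_null hsub (lemA hP hF i)

end FSSEPPaper
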